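/- arXiv:2308.12684 — 10 statements merged into one kernel-verified Lean document; each statement's English description precedes it below -/
import Mathlib

section
/- Let γ : ℝ → EuclideanSpace ℝ (Fin 3) be a smooth curve, unit speed (‖γ'(t)‖ = 1 for all t), closed with period ℓ > 0 (γ(t + ℓ) = γ(t) for all t), and lying on the unit sphere (‖γ(t)‖ = 1 for all t). Then its curvature κ(t) = ‖γ''(t)‖ is nowhere zero, and the total torsion of γ vanishes: ∫₀^ℓ τ(t) dt = 0, where τ(t) = ⟨γ'(t) ×₃ γ''(t), γ'''(t)⟩ / ‖γ''(t)‖². -/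
open scoped RealInnerProductSpace

/-- Decomposition certificate: under the spherical-curve constraints,
`z = -x + ⟨x ×₃ y, z⟩ • (x ×₃ y)` coordinatewise. -/
lemma sphere_keyA (x0 x1 x2 y0 y1 y2 z0 z1 z2 : ℝ)
    (hxx : x0*x0+x1*x1+x2*x2 = 1) (hyy : y0*y0+y1*y1+y2*y2 = 1)
    (hxy : x0*y0+x1*y1+x2*y2 = 0) (hxz : x0*z0+x1*z1+x2*z2 = -1)
    (hyz : y0*z0+y1*z1+y2*z2 = 0) :
    z0 = -x0 + ((x1*y2-x2*y1)*z0 + (x2*y0-x0*y2)*z1 + (x0*y1-x1*y0)*z2) * (x1*y2-x2*y1) ∧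
    z1 = -x1 + ((x1*y2-x2*y1)*z0 + (x2*y0-x0*y2)*z1 + (x0*y1-x1*y0)*z2) * (x2*y0-x0*y2) ∧
    z2 = -x2 + ((x1*y2-x2*y1)*z0 + (x2*y0-x0*y2)*z1 + (x0*y1-x1*y0)*z2) * (x0*y1-x1*y0) := by
  have M0 : z0*((x0*x0+x1*x1+x2*x2)*(y0*y0+y1*y1+y2*y2) - (x0*y0+x1*y1+x2*y2)^2)
      = (x0*z0+x1*z1+x2*z2)*(x0*(y0*y0+y1*y1+y2*y2) - y0*(x0*y0+x1*y1+x2*y2))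
        + (y0*z0+y1*z1+y2*z2)*(y0*(x0*x0+x1*x1+x2*x2) - x0*(x0*y0+x1*y1+x2*y2))
        + ((x1*y2-x2*y1)*z0 + (x2*y0-x0*y2)*z1 + (x0*y1-x1*y0)*z2)*(x1*y2-x2*y1) := by ring
  have M1 : z1*((x0*x0+x1*x1+x2*x2)*(y0*y0+y1*y1+y2*y2) - (x0*y0+x1*y1+x2*y2)^2)
      = (x0*z0+x1*z1+x2*z2)*(x1*(y0*y0+y1*y1+y2*y2) - y1*(x0*y0+x1*y1+x2*y2))
        + (y0*z0+y1*z1+y2*z2)*(y1*(x0*x0+x1*x1+x2*x2) - x1*(x0*y0+x1*y1+x2*y2))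
        + ((x1*y2-x2*y1)*z0 + (x2*y0-x0*y2)*z1 + (x0*y1-x1*y0)*z2)*(x2*y0-x0*y2) := by ring
  have M2 : z2*((x0*x0+x1*x1+x2*x2)*(y0*y0+y1*y1+y2*y2) - (x0*y0+x1*y1+x2*y2)^2)
      = (x0*z0+x1*z1+x2*z2)*(x2*(y0*y0+y1*y1+y2*y2) - y2*(x0*y0+x1*y1+x2*y2))
        + (y0*z0+y1*z1+y2*z2)*(y2*(x0*x0+x1*x1+x2*x2) - x2*(x0*y0+x1*y1+x2*y2))
        + ((x1*y2-x2*y1)*z0 + (x2*y0-x0*y2)*z1 + (x0*y1-x1*y0)*z2)*(x0*y1-x1*y0) := by ring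
  refine ⟨?_, ?_, ?_⟩
  · linear_combination M0 + (-z0) * hxx + (x0*(x0*z0+x1*z1+x2*z2) - z0*(x0*x0+x1*x1+x2*x2)) * hyy
      + (z0*(x0*y0+x1*y1+x2*y2) - y0*(x0*z0+x1*z1+x2*z2)) * hxy + x0 * hxz
      + (y0*(x0*x0+x1*x1+x2*x2) - x0*(x0*y0+x1*y1+x2*y2)) * hyz
  · linear_combination M1 + (-z1) * hxx + (x1*(x0*z0+x1*z1+x2*z2) - z1*(x0*x0+x1*x1+x2*x2)) * hyy
      + (z1*(x0*y0+x1*y1+x2*y2) - y1*(x0*z0+x1*z1+x2*z2)) * hxy + x1 * hxz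
      + (y1*(x0*x0+x1*x1+x2*x2) - x1*(x0*y0+x1*y1+x2*y2)) * hyz
  · linear_combination M2 + (-z2) * hxx + (x2*(x0*z0+x1*z1+x2*z2) - z2*(x0*x0+x1*x1+x2*x2)) * hyy
      + (z2*(x0*y0+x1*y1+x2*y2) - y2*(x0*z0+x1*z1+x2*z2)) * hxy + x2 * hxz
      + (y2*(x0*x0+x1*x1+x2*x2) - x2*(x0*y0+x1*y1+x2*y2)) * hyz

/-- The torsion of a unit-speed curve in `ℝ³` with nowhere-vanishing curvature:
`τ(t) = ⟨γ'(t) ×₃ γ''(t), γ'''(t)⟩ / ‖γ''(t)‖²`. -/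
noncomputable def torsion3 (γ : ℝ → EuclideanSpace ℝ (Fin 3)) (t : ℝ) : ℝ :=
  (inner ℝ ((WithLp.equiv 2 (Fin 3 → ℝ)).symm
      (crossProduct (WithLp.equiv 2 (Fin 3 → ℝ) (deriv γ t))
        (WithLp.equiv 2 (Fin 3 → ℝ) (deriv (deriv γ) t))))
    (deriv (deriv (deriv γ)) t) : ℝ) / ‖deriv (deriv γ) t‖ ^ 2

/-- **Total torsion theorem.** A smooth closed unit-speed curve on the unit sphere has
nowhere-vanishing curvature and vanishing total torsion. -/
theorem total_torsion_of_closed_spherical_curve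
    (γ : ℝ → EuclideanSpace ℝ (Fin 3)) (ℓ : ℝ) (hℓ : 0 < ℓ)
    (hsmooth : ContDiff ℝ (⊤ : ℕ∞) γ)
    (hunit : ∀ t, ‖deriv γ t‖ = 1)
    (hclosed : ∀ t, γ (t + ℓ) = γ t)
    (hsphere : ∀ t, ‖γ t‖ = 1) :
    (∀ t, ‖deriv (deriv γ) t‖ ≠ 0) ∧ ∫ t in (0:ℝ)..ℓ, torsion3 γ t = 0 := by
  set y := deriv γ with hy_def
  set z := deriv y with hz_def
  set w := deriv z with hw_def
  have hsy : ContDiff ℝ (⊤ : ℕ∞) y := (contDiff_infty_iff_deriv.mp hsmooth).2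
  have hsz : ContDiff ℝ (⊤ : ℕ∞) z := (contDiff_infty_iff_deriv.mp hsy).2
  have hsw : ContDiff ℝ (⊤ : ℕ∞) w := (contDiff_infty_iff_deriv.mp hsz).2
  have hdγ : ∀ t, HasDerivAt γ (y t) t := fun t => ((hsmooth.differentiable (by simp)) t).hasDerivAt
  have hdy : ∀ t, HasDerivAt y (z t) t := fun t => ((hsy.differentiable (by simp)) t).hasDerivAt
  have hdz : ∀ t, HasDerivAt z (w t) t := fun t => ((hsz.differentiable (by simp)) t).hasDerivAt
  have hIP : ∀ a b : EuclideanSpace ℝ (Fin 3),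
      (inner ℝ a b : ℝ) = a 0 * b 0 + a 1 * b 1 + a 2 * b 2 := by
    intro a b
    simp [PiLp.inner_apply, Fin.sum_univ_three, RCLike.inner_apply, conj_trivial]
    ring
  -- basic inner product identities
  have hγγ : ∀ t, (inner ℝ (γ t) (γ t) : ℝ) = 1 := by
    intro t; rw [real_inner_self_eq_norm_sq, hsphere t]; norm_num
  have hyy : ∀ t, (inner ℝ (y t) (y t) : ℝ) = 1 := by
    intro t; rw [real_inner_self_eq_norm_sq, hunit t]; norm_num
  have hA : ∀ t, (inner ℝ (γ t) (y t) : ℝ) = 0 := by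
    intro t
    have h1 : HasDerivAt (fun s => (inner ℝ (γ s) (γ s) : ℝ))
        (inner ℝ (γ t) (y t) + inner ℝ (y t) (γ t)) t := (hdγ t).inner ℝ (hdγ t)
    have h2 : HasDerivAt (fun s => (inner ℝ (γ s) (γ s) : ℝ)) 0 t := by
      have he : (fun s => (inner ℝ (γ s) (γ s) : ℝ)) = fun _ => 1 := funext fun s => hγγ s
      rw [he]; exact hasDerivAt_const t 1
    have h3 := h1.unique h2
    have h4 : (inner ℝ (y t) (γ t) : ℝ) = inner ℝ (γ t) (y t) := real_inner_comm _ _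
    linarith
  have hB : ∀ t, (inner ℝ (y t) (z t) : ℝ) = 0 := by
    intro t
    have h1 : HasDerivAt (fun s => (inner ℝ (y s) (y s) : ℝ))
        (inner ℝ (y t) (z t) + inner ℝ (z t) (y t)) t := (hdy t).inner ℝ (hdy t)
    have h2 : HasDerivAt (fun s => (inner ℝ (y s) (y s) : ℝ)) 0 t := by
      have he : (fun s => (inner ℝ (y s) (y s) : ℝ)) = fun _ => 1 := funext fun s => hyy s
      rw [he]; exact hasDerivAt_const t 1
    have h3 := h1.unique h2
    have h4 : (inner ℝ (z t) (y t) : ℝ) = inner ℝ (y t) (z t) := real_inner_comm _ _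
    linarith
  have hC : ∀ t, (inner ℝ (γ t) (z t) : ℝ) = -1 := by
    intro t
    have h1 : HasDerivAt (fun s => (inner ℝ (γ s) (y s) : ℝ))
        (inner ℝ (γ t) (z t) + inner ℝ (y t) (y t)) t := (hdγ t).inner ℝ (hdy t)
    have h2 : HasDerivAt (fun s => (inner ℝ (γ s) (y s) : ℝ)) 0 t := by
      have he : (fun s => (inner ℝ (γ s) (y s) : ℝ)) = fun _ => 0 := funext fun s => hA s
      rw [he]; exact hasDerivAt_const t 0
    have h3 := h1.unique h2
    have h4 := hyy t
    linarith
  have hD : ∀ t, (inner ℝ (γ t) (w t) : ℝ) = 0 := by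
    intro t
    have h1 : HasDerivAt (fun s => (inner ℝ (γ s) (z s) : ℝ))
        (inner ℝ (γ t) (w t) + inner ℝ (y t) (z t)) t := (hdγ t).inner ℝ (hdz t)
    have h2 : HasDerivAt (fun s => (inner ℝ (γ s) (z s) : ℝ)) 0 t := by
      have he : (fun s => (inner ℝ (γ s) (z s) : ℝ)) = fun _ => -1 := funext fun s => hC s
      rw [he]; exact hasDerivAt_const t (-1)
    have h3 := h1.unique h2
    have h4 := hB t
    linarith
  -- coordinatewise derivatives
  have hcoord : ∀ (f g : ℝ → EuclideanSpace ℝ (Fin 3)) (t : ℝ), HasDerivAt f (g t) t →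
      ∀ i : Fin 3, HasDerivAt (fun s => f s i) (g t i) t := by
    intro f g t hf i
    have := (EuclideanSpace.proj i (𝕜 := ℝ)).hasFDerivAt.comp_hasDerivAt t hf
    exact this
  -- the auxiliary functions
  set u : ℝ → ℝ := fun t => (y t 1 * z t 2 - y t 2 * z t 1) * γ t 0
      + (y t 2 * z t 0 - y t 0 * z t 2) * γ t 1
      + (y t 0 * z t 1 - y t 1 * z t 0) * γ t 2 with hu_def
  set v : ℝ → ℝ := fun t => ((y t 1 * w t 2 - y t 2 * w t 1) * γ t 0
      + (y t 2 * w t 0 - y t 0 * w t 2) * γ t 1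
      + (y t 0 * w t 1 - y t 1 * w t 0) * γ t 2) / (1 + u t ^ 2) with hv_def
  -- keyA at each time
  have hkey : ∀ t,
      z t 0 = -γ t 0 + ((γ t 1 * y t 2 - γ t 2 * y t 1) * z t 0
          + (γ t 2 * y t 0 - γ t 0 * y t 2) * z t 1
          + (γ t 0 * y t 1 - γ t 1 * y t 0) * z t 2) * (γ t 1 * y t 2 - γ t 2 * y t 1) ∧
      z t 1 = -γ t 1 + ((γ t 1 * y t 2 - γ t 2 * y t 1) * z t 0
          + (γ t 2 * y t 0 - γ t 0 * y t 2) * z t 1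
          + (γ t 0 * y t 1 - γ t 1 * y t 0) * z t 2) * (γ t 2 * y t 0 - γ t 0 * y t 2) ∧
      z t 2 = -γ t 2 + ((γ t 1 * y t 2 - γ t 2 * y t 1) * z t 0
          + (γ t 2 * y t 0 - γ t 0 * y t 2) * z t 1
          + (γ t 0 * y t 1 - γ t 1 * y t 0) * z t 2) * (γ t 0 * y t 1 - γ t 1 * y t 0) := by
    intro t
    have h1 := hγγ t; rw [hIP] at h1
    have h2 := hyy t; rw [hIP] at h2
    have h3 := hA t; rw [hIP] at h3
    have h4 := hC t; rw [hIP] at h4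
    have h5 := hB t; rw [hIP] at h5
    exact sphere_keyA _ _ _ _ _ _ _ _ _ h1 h2 h3 h4 h5
  -- curvature squared
  have hnorm : ∀ t, ‖z t‖ ^ 2 = 1 + u t ^ 2 := by
    intro t
    obtain ⟨k0, k1, k2⟩ := hkey t
    have h4 := hC t; rw [hIP] at h4
    have hzz : ‖z t‖ ^ 2 = (inner ℝ (z t) (z t) : ℝ) := (real_inner_self_eq_norm_sq _).symm
    rw [hzz, hIP, hu_def]
    linear_combination z t 0 * k0 + z t 1 * k1 + z t 2 * k2 - h4
  have hcurv : ∀ t, ‖z t‖ ≠ 0 := by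
    intro t h0
    have h := hnorm t
    rw [h0] at h
    nlinarith [sq_nonneg (u t)]
  refine ⟨hcurv, ?_⟩
  -- derivative of u
  have hu : ∀ t, HasDerivAt u ((y t 1 * w t 2 - y t 2 * w t 1) * γ t 0
      + (y t 2 * w t 0 - y t 0 * w t 2) * γ t 1
      + (y t 0 * w t 1 - y t 1 * w t 0) * γ t 2) t := by
    intro t
    have hx0 := hcoord γ y t (hdγ t) 0
    have hx1 := hcoord γ y t (hdγ t) 1
    have hx2 := hcoord γ y t (hdγ t) 2
    have hy0 := hcoord y z t (hdy t) 0
    have hy1 := hcoord y z t (hdy t) 1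
    have hy2 := hcoord y z t (hdy t) 2
    have hz0 := hcoord z w t (hdz t) 0
    have hz1 := hcoord z w t (hdz t) 1
    have hz2 := hcoord z w t (hdz t) 2
    have H := ((((hy1.mul hz2).sub (hy2.mul hz1)).mul hx0).add
        (((hy2.mul hz0).sub (hy0.mul hz2)).mul hx1)).add
        (((hy0.mul hz1).sub (hy1.mul hz0)).mul hx2)
    rw [hu_def]
    refine H.congr_deriv ?_
    have h3 := hB t; rw [hIP] at h3
    simp only [Pi.mul_apply, Pi.sub_apply]
    ring
  -- torsion equals v
  have htor : ∀ t, torsion3 γ t = v t := by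
    intro t
    obtain ⟨k0, k1, k2⟩ := hkey t
    have h3 := hA t; rw [hIP] at h3
    have h2 := hyy t; rw [hIP] at h2
    have h6 := hD t; rw [hIP] at h6
    rw [torsion3, ← hy_def, ← hz_def, ← hw_def, hnorm t, hv_def, hIP]
    simp only [cross_apply, WithLp.equiv_apply, WithLp.equiv_symm_apply, PiLp.toLp_apply,
      Matrix.cons_val_zero, Matrix.cons_val_one, Matrix.head_cons, Matrix.cons_val_two,
      Matrix.tail_cons]
    rw [div_eq_div_iff (by positivity) (by positivity)]
    rw [hu_def]
    set D := (γ t 1 * y t 2 - γ t 2 * y t 1) * z t 0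
        + (γ t 2 * y t 0 - γ t 0 * y t 2) * z t 1
        + (γ t 0 * y t 1 - γ t 1 * y t 0) * z t 2 with hD_def
    linear_combination (1 + ((y t 1 * z t 2 - y t 2 * z t 1) * γ t 0
        + (y t 2 * z t 0 - y t 0 * z t 2) * γ t 1
        + (y t 0 * z t 1 - y t 1 * z t 0) * γ t 2) ^ 2) *
      ((w t 1 * y t 2 - w t 2 * y t 1) * k0 + (w t 2 * y t 0 - w t 0 * y t 2) * k1
        + (w t 0 * y t 1 - w t 1 * y t 0) * k2
        + D * (y t 0 * y t 0 + y t 1 * y t 1 + y t 2 * y t 2) * h6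
        - D * (w t 0 * y t 0 + w t 1 * y t 1 + w t 2 * y t 2) * h3)
  -- derivative of arctan ∘ u
  set F : ℝ → ℝ := fun t => Real.arctan (u t) with hF_def
  have hF : ∀ t, HasDerivAt F (v t) t := by
    intro t
    have h := (Real.hasDerivAt_arctan (u t)).comp t (hu t)
    rw [hF_def, hv_def]
    refine h.congr_deriv ?_
    field_simp
  -- continuity of v
  have hcont : Continuous v := by
    have hcγ : ∀ i : Fin 3, Continuous fun t => γ t i := by
      intro i
      exact ((EuclideanSpace.proj i (𝕜 := ℝ)).continuous.comp hsmooth.continuous : _)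
    have hcy : ∀ i : Fin 3, Continuous fun t => y t i := by
      intro i
      exact ((EuclideanSpace.proj i (𝕜 := ℝ)).continuous.comp hsy.continuous : _)
    have hcz : ∀ i : Fin 3, Continuous fun t => z t i := by
      intro i
      exact ((EuclideanSpace.proj i (𝕜 := ℝ)).continuous.comp hsz.continuous : _)
    have hcw : ∀ i : Fin 3, Continuous fun t => w t i := by
      intro i
      exact ((EuclideanSpace.proj i (𝕜 := ℝ)).continuous.comp hsw.continuous : _)
    have hcu : Continuous u := by
      rw [hu_def]
      exact (((((hcy 1).mul (hcz 2)).sub ((hcy 2).mul (hcz 1))).mul (hcγ 0)).add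
        ((((hcy 2).mul (hcz 0)).sub ((hcy 0).mul (hcz 2))).mul (hcγ 1))).add
          ((((hcy 0).mul (hcz 1)).sub ((hcy 1).mul (hcz 0))).mul (hcγ 2))
    have hcnum : Continuous fun t => (y t 1 * w t 2 - y t 2 * w t 1) * γ t 0
        + (y t 2 * w t 0 - y t 0 * w t 2) * γ t 1
        + (y t 0 * w t 1 - y t 1 * w t 0) * γ t 2 :=
      (((((hcy 1).mul (hcw 2)).sub ((hcy 2).mul (hcw 1))).mul (hcγ 0)).add
        ((((hcy 2).mul (hcw 0)).sub ((hcy 0).mul (hcw 2))).mul (hcγ 1))).add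
          ((((hcy 0).mul (hcw 1)).sub ((hcy 1).mul (hcw 0))).mul (hcγ 2))
    rw [hv_def]
    exact hcnum.div (continuous_const.add (hcu.pow 2)) (fun t => by positivity)
  -- periodicity
  have hPy : ∀ t, y (t + ℓ) = y t := by
    intro t
    have h := deriv_comp_add_const γ ℓ t
    have h2 : (fun x => γ (x + ℓ)) = γ := funext hclosed
    rw [h2] at h
    exact h.symm
  have hPz : ∀ t, z (t + ℓ) = z t := by
    intro t
    have h := deriv_comp_add_const y ℓ t
    have h2 : (fun x => y (x + ℓ)) = y := funext hPy
    rw [h2] at h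
    exact h.symm
  have hγℓ : γ ℓ = γ 0 := by simpa using hclosed 0
  have hyℓ : y ℓ = y 0 := by simpa using hPy 0
  have hzℓ : z ℓ = z 0 := by simpa using hPz 0
  have huℓ : u ℓ = u 0 := by rw [hu_def]; simp only [hγℓ, hyℓ, hzℓ]
  -- conclude
  calc ∫ t in (0:ℝ)..ℓ, torsion3 γ t = ∫ t in (0:ℝ)..ℓ, v t := by
        simp only [htor]
    _ = F ℓ - F 0 := intervalIntegral.integral_eq_sub_of_hasDerivAt
        (fun t _ => hF t) (hcont.intervalIntegrable 0 ℓ)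
    _ = 0 := by rw [hF_def]; simp only [huℓ, sub_self]
end

section
/- Let γ : ℝ → EuclideanSpace ℝ (Fin 3) be a smooth unit-speed curve, closed with period ℓ > 0, with nowhere-vanishing curvature κ(t) = ‖γ''(t)‖ > 0. Suppose N : ℝ → EuclideanSpace ℝ (Fin 3) is a smooth map with N(t + ℓ) = N(t), ‖N(t)‖ = 1, ⟨N(t), γ'(t)⟩ = 0 for all t, and such that for every t the vector N'(t) is a scalar multiple of γ'(t) (i.e., γ is a line of curvature of an oriented surface with unit normal N along γ). Then the total torsion ∫₀^ℓ τ(t) dt is an integer multiple of 2π, where τ(t) = ⟨γ'(t) ×₃ γ''(t), γ'''(t)⟩ / ‖γ''(t)‖². -/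
open scoped RealInnerProductSpace

open scoped ContDiff

local notation "E3" => EuclideanSpace ℝ (Fin 3)

noncomputable def cross3 (u v : E3) : E3 :=
  (WithLp.equiv 2 (Fin 3 → ℝ)).symm
    (crossProduct (WithLp.equiv 2 (Fin 3 → ℝ) u) (WithLp.equiv 2 (Fin 3 → ℝ) v))

lemma r3inner (x y : E3) : ⟪x, y⟫ = x 0 * y 0 + x 1 * y 1 + x 2 * y 2 := by
  simp [PiLp.inner_apply, RCLike.inner_apply, Fin.sum_univ_three]; ring

lemma cross3_c0 (u v : E3) : cross3 u v 0 = u 1 * v 2 - u 2 * v 1 := rfl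
lemma cross3_c1 (u v : E3) : cross3 u v 1 = u 2 * v 0 - u 0 * v 2 := rfl
lemma cross3_c2 (u v : E3) : cross3 u v 2 = u 0 * v 1 - u 1 * v 0 := rfl

lemma inner_cross_left (u v : E3) : ⟪cross3 u v, u⟫ = 0 := by
  rw [r3inner]; simp only [cross3_c0, cross3_c1, cross3_c2]; ring

lemma inner_cross_right (u v : E3) : ⟪cross3 u v, v⟫ = 0 := by
  rw [r3inner]; simp only [cross3_c0, cross3_c1, cross3_c2]; ring

lemma cross3_smul_right (u v : E3) (c : ℝ) : cross3 u (c • v) = c • cross3 u v := by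
  ext i
  fin_cases i <;>
    simp [cross3_c0, cross3_c1, cross3_c2, PiLp.smul_apply, smul_eq_mul] <;> ring

lemma cross3_self (u : E3) : cross3 u u = 0 := by
  ext i
  fin_cases i <;> · simp [cross3_c0, cross3_c1, cross3_c2]; ring

lemma cross3_self_inner (u v : E3) :
    ⟪cross3 u v, cross3 u v⟫ = ⟪u, u⟫ * ⟪v, v⟫ - ⟪u, v⟫ ^ 2 := by
  simp only [r3inner, cross3_c0, cross3_c1, cross3_c2]; ring

lemma expand3 (T n u v : E3) (hT : ⟪T, T⟫ = 1) (hn : ⟪n, n⟫ = 1) (hTn : ⟪T, n⟫ = 0) :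
    ⟪u, v⟫ = ⟪u, T⟫ * ⟪T, v⟫ + ⟪u, n⟫ * ⟪n, v⟫ + ⟪u, cross3 T n⟫ * ⟪cross3 T n, v⟫ := by
  have key : ⟪u, v⟫ * (⟪T, T⟫ * ⟪n, n⟫ - ⟪T, n⟫ ^ 2) =
      ⟪u, T⟫ * ⟪T, v⟫ * ⟪n, n⟫ + ⟪u, n⟫ * ⟪n, v⟫ * ⟪T, T⟫
        - ⟪u, T⟫ * ⟪n, v⟫ * ⟪T, n⟫ - ⟪u, n⟫ * ⟪T, v⟫ * ⟪T, n⟫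
        + ⟪u, cross3 T n⟫ * ⟪cross3 T n, v⟫ := by
    simp only [r3inner, cross3_c0, cross3_c1, cross3_c2]
    ring
  rw [hT, hn, hTn] at key
  linarith

lemma hasDerivAt_comp_e3 {h : ℝ → E3} {h' : E3} {t : ℝ} (i : Fin 3)
    (hh : HasDerivAt h h' t) : HasDerivAt (fun s => h s i) (h' i) t :=
  (EuclideanSpace.proj i : E3 →L[ℝ] ℝ).hasFDerivAt.comp_hasDerivAt t hh

lemma hasDerivAt_cross {f g : ℝ → E3} {f' g' : E3} {t : ℝ}
    (hf : HasDerivAt f f' t) (hg : HasDerivAt g g' t) :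
    HasDerivAt (fun s => cross3 (f s) (g s)) (cross3 f' (g t) + cross3 (f t) g') t := by
  have e0 : HasDerivAt (fun s =>
      ((f s 1 * g s 2 - f s 2 * g s 1) • EuclideanSpace.single (0 : Fin 3) (1:ℝ)
      + (f s 2 * g s 0 - f s 0 * g s 2) • EuclideanSpace.single (1 : Fin 3) (1:ℝ))
      + (f s 0 * g s 1 - f s 1 * g s 0) • EuclideanSpace.single (2 : Fin 3) (1:ℝ))
      ((((f' 1 * g t 2 + f t 1 * g' 2) - (f' 2 * g t 1 + f t 2 * g' 1)) • EuclideanSpace.single (0 : Fin 3) (1:ℝ)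
      + ((f' 2 * g t 0 + f t 2 * g' 0) - (f' 0 * g t 2 + f t 0 * g' 2)) • EuclideanSpace.single (1 : Fin 3) (1:ℝ))
      + ((f' 0 * g t 1 + f t 0 * g' 1) - (f' 1 * g t 0 + f t 1 * g' 0)) • EuclideanSpace.single (2 : Fin 3) (1:ℝ)) t := by
    have c : ∀ i : Fin 3, HasDerivAt (fun s => f s i) (f' i) t := fun i => hasDerivAt_comp_e3 i hf
    have d : ∀ i : Fin 3, HasDerivAt (fun s => g s i) (g' i) t := fun i => hasDerivAt_comp_e3 i hg
    exact ((((((c 1).mul (d 2)).sub ((c 2).mul (d 1))).smul_const _).add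
      ((((c 2).mul (d 0)).sub ((c 0).mul (d 2))).smul_const _)).add
      ((((c 0).mul (d 1)).sub ((c 1).mul (d 0))).smul_const _))
  convert e0 using 1
  · funext s
    ext i
    fin_cases i <;>
      · simp [cross3_c0, cross3_c1, cross3_c2, EuclideanSpace.single_apply]
  · ext i
    fin_cases i <;>
      · simp [cross3_c0, cross3_c1, cross3_c2, EuclideanSpace.single_apply]
        ring

/-- The total torsion of a closed line of curvature of an oriented surface in `ℝ³`
is an integer multiple of `2π`. -/
theorem total_torsion_of_closed_line_of_curvature
    (γ : ℝ → EuclideanSpace ℝ (Fin 3)) (ℓ : ℝ) (hℓ : 0 < ℓ)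
    (hsmooth : ContDiff ℝ (⊤ : ℕ∞) γ)
    (hunit : ∀ t, ‖deriv γ t‖ = 1)
    (hclosed : ∀ t, γ (t + ℓ) = γ t)
    (hcurv : ∀ t, ‖deriv (deriv γ) t‖ > 0)
    (N : ℝ → EuclideanSpace ℝ (Fin 3))
    (hNsmooth : ContDiff ℝ (⊤ : ℕ∞) N)
    (hNclosed : ∀ t, N (t + ℓ) = N t)
    (hNunit : ∀ t, ‖N t‖ = 1)
    (hNorth : ∀ t, ⟪N t, deriv γ t⟫ = 0)
    (hRodrigues : ∀ t, ∃ c : ℝ, deriv N t = c • deriv γ t) :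
    ∃ n : ℤ, ∫ t in (0:ℝ)..ℓ, torsion3 γ t = 2 * Real.pi * n := by
  -- abbreviations
  set g1 : ℝ → E3 := deriv γ with hg1def
  set g2 : ℝ → E3 := deriv g1 with hg2def
  set g3 : ℝ → E3 := deriv g2 with hg3def
  -- smoothness
  have hgsm : ContDiff ℝ ∞ γ := hsmooth
  have h1 := contDiff_infty_iff_deriv.mp hgsm
  have h2 := contDiff_infty_iff_deriv.mp h1.2
  have h3 := contDiff_infty_iff_deriv.mp h2.2
  have hd1 : ∀ t, HasDerivAt g1 (g2 t) t := fun t => (h2.1 t).hasDerivAt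
  have hd2 : ∀ t, HasDerivAt g2 (g3 t) t := fun t => (h3.1 t).hasDerivAt
  have hNsm : ContDiff ℝ ∞ N := hNsmooth
  have hNd : ∀ t, HasDerivAt N (deriv N t) t := fun t =>
    (((contDiff_infty_iff_deriv.mp hNsm).1) t).hasDerivAt
  -- curvature
  set κ : ℝ → ℝ := fun t => ‖g2 t‖ with hκdef
  have hκpos : ∀ t, 0 < κ t := hcurv
  have hκne : ∀ t, κ t ≠ 0 := fun t => (hκpos t).ne'
  have hT1 : ∀ t, ⟪g1 t, g1 t⟫ = 1 := by
    intro t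
    rw [real_inner_self_eq_norm_mul_norm, hunit t]; norm_num
  have h12 : ∀ t, ⟪g1 t, g2 t⟫ = 0 := by
    intro t
    have hc : HasDerivAt (fun s => ⟪g1 s, g1 s⟫) (⟪g1 t, g2 t⟫ + ⟪g2 t, g1 t⟫) t :=
      (hd1 t).inner ℝ (hd1 t)
    have hc' : HasDerivAt (fun s => ⟪g1 s, g1 s⟫) 0 t := by
      have e : (fun s => ⟪g1 s, g1 s⟫) = fun _ => (1 : ℝ) := funext hT1
      rw [e]; exact hasDerivAt_const t 1
    have h0 := hc.unique hc'
    have := real_inner_comm (g1 t) (g2 t)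
    linarith
  -- derivative of curvature
  have hκd : ∀ t, HasDerivAt κ (⟪g2 t, g3 t⟫ / κ t) t := by
    intro t
    have hip : ∀ s, 0 < ⟪g2 s, g2 s⟫ := by
      intro s
      rw [real_inner_self_eq_norm_mul_norm]
      exact mul_pos (hκpos s) (hκpos s)
    have hq : HasDerivAt (fun s => ⟪g2 s, g2 s⟫) (⟪g2 t, g3 t⟫ + ⟪g3 t, g2 t⟫) t :=
      (hd2 t).inner ℝ (hd2 t)
    have hsq : HasDerivAt Real.sqrt (1 / (2 * Real.sqrt ⟪g2 t, g2 t⟫)) ⟪g2 t, g2 t⟫ :=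
      Real.hasDerivAt_sqrt (hip t).ne'
    have hcomp := hsq.comp t hq
    have hkey : κ = fun s => Real.sqrt ⟪g2 s, g2 s⟫ := by
      funext s
      rw [hκdef, real_inner_self_eq_norm_mul_norm, Real.sqrt_mul_self (norm_nonneg _)]
    have hval : Real.sqrt ⟪g2 t, g2 t⟫ = κ t := by rw [hkey]
    have hc2 : HasDerivAt (fun s => Real.sqrt ⟪g2 s, g2 s⟫) (⟪g2 t, g3 t⟫ / κ t) t := by
      refine hcomp.congr_deriv ?_
      rw [hval, real_inner_comm (g3 t) (g2 t)]
      field_simp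
      ring
    rwa [← hkey] at hc2
  -- the Frenet frame
  set n : ℝ → E3 := fun t => (κ t)⁻¹ • g2 t with hndef
  set n' : ℝ → E3 := fun t =>
    (κ t)⁻¹ • g3 t + (-(⟪g2 t, g3 t⟫ / κ t) / κ t ^ 2) • g2 t with hn'def
  have hnd : ∀ t, HasDerivAt n (n' t) t := by
    intro t
    exact ((hκd t).inv (hκne t)).smul (hd2 t)
  set B : ℝ → E3 := fun t => cross3 (g1 t) (n t) with hBdef
  set B' : ℝ → E3 := fun t => cross3 (g2 t) (n t) + cross3 (g1 t) (n' t) with hB'def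
  have hBd : ∀ t, HasDerivAt B (B' t) t := fun t => hasDerivAt_cross (hd1 t) (hnd t)
  -- orthonormality
  have hTn : ∀ t, ⟪g1 t, n t⟫ = 0 := by
    intro t; rw [hndef]; simp only [real_inner_smul_right]; rw [h12 t]; ring
  have hnn : ∀ t, ⟪n t, n t⟫ = 1 := by
    intro t
    rw [hndef]
    simp only [real_inner_smul_right, real_inner_smul_left]
    rw [real_inner_self_eq_norm_mul_norm]
    field_simp [hκne t]
    rfl
  -- torsion identities
  have hτ : ∀ t, torsion3 γ t = ⟪cross3 (g1 t) (g2 t), g3 t⟫ / κ t ^ 2 := fun t => rfl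
  have hBn' : ∀ t, ⟪B t, n' t⟫ = torsion3 γ t := by
    intro t
    have hB : B t = (κ t)⁻¹ • cross3 (g1 t) (g2 t) := by
      rw [hBdef, hndef]; exact cross3_smul_right _ _ _
    rw [hB, hn'def, hτ t]
    simp only [inner_add_right, real_inner_smul_left, real_inner_smul_right]
    rw [inner_cross_right]
    have hx : ∀ x : ℝ, (κ t)⁻¹ * ((κ t)⁻¹ * x)
        + -(⟪g2 t, g3 t⟫ / κ t) / κ t ^ 2 * ((κ t)⁻¹ * 0) = x / κ t ^ 2 := by
      intro x
      rw [mul_zero, mul_zero, add_zero, pow_two, div_eq_mul_inv, mul_inv]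
      ring
    exact hx _
  have hnB : ∀ t, ⟪n t, B t⟫ = 0 := by
    intro t
    rw [real_inner_comm, hBdef]
    exact inner_cross_right _ _
  have hBB : ∀ t, ⟪B t, B t⟫ = 1 := by
    intro t
    rw [hBdef, cross3_self_inner, hT1 t, hnn t, hTn t]; norm_num
  have hTB : ∀ t, ⟪g1 t, B t⟫ = 0 := by
    intro t
    rw [real_inner_comm, hBdef]
    exact inner_cross_left _ _
  -- derivative relations of the frame
  have hnn' : ∀ t, ⟪n t, n' t⟫ = 0 := by
    intro t
    have hc : HasDerivAt (fun s => ⟪n s, n s⟫) (⟪n t, n' t⟫ + ⟪n' t, n t⟫) t :=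
      (hnd t).inner ℝ (hnd t)
    have hc' : HasDerivAt (fun s => ⟪n s, n s⟫) 0 t := by
      have e : (fun s => ⟪n s, n s⟫) = fun _ => (1 : ℝ) := funext hnn
      rw [e]; exact hasDerivAt_const t 1
    have h0 := hc.unique hc'
    have := real_inner_comm (n t) (n' t)
    linarith
  have hBB' : ∀ t, ⟪B t, B' t⟫ = 0 := by
    intro t
    have hc : HasDerivAt (fun s => ⟪B s, B s⟫) (⟪B t, B' t⟫ + ⟪B' t, B t⟫) t :=
      (hBd t).inner ℝ (hBd t)
    have hc' : HasDerivAt (fun s => ⟪B s, B s⟫) 0 t := by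
      have e : (fun s => ⟪B s, B s⟫) = fun _ => (1 : ℝ) := funext hBB
      rw [e]; exact hasDerivAt_const t 1
    have h0 := hc.unique hc'
    have := real_inner_comm (B t) (B' t)
    linarith
  have hnB' : ∀ t, ⟪n t, B' t⟫ = -torsion3 γ t := by
    intro t
    have hc : HasDerivAt (fun s => ⟪n s, B s⟫) (⟪n t, B' t⟫ + ⟪n' t, B t⟫) t :=
      (hnd t).inner ℝ (hBd t)
    have hc' : HasDerivAt (fun s => ⟪n s, B s⟫) 0 t := by
      have e : (fun s => ⟪n s, B s⟫) = fun _ => (0 : ℝ) := funext hnB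
      rw [e]; exact hasDerivAt_const t 0
    have h0 := hc.unique hc'
    have h1 : ⟪n' t, B t⟫ = torsion3 γ t := by rw [real_inner_comm]; exact hBn' t
    linarith
  -- the angle functions
  set a : ℝ → ℝ := fun t => ⟪N t, n t⟫ with hadef
  set b : ℝ → ℝ := fun t => ⟪N t, B t⟫ with hbdef
  have had : ∀ t, HasDerivAt a (torsion3 γ t * b t) t := by
    intro t
    have h := (hNd t).inner ℝ (hnd t)
    obtain ⟨c, hc⟩ := hRodrigues t
    have hN'n : ⟪deriv N t, n t⟫ = 0 := by
      rw [hc, real_inner_smul_left, hTn t]; ring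
    have hNn' : ⟪N t, n' t⟫ = torsion3 γ t * b t := by
      rw [expand3 (g1 t) (n t) (N t) (n' t) (hT1 t) (hnn t) (hTn t)]
      have hBeq : cross3 (g1 t) (n t) = B t := by rw [hBdef]
      rw [hBeq, hNorth t, hnn' t, hBn' t, hbdef]
      ring
    have : ⟪N t, n' t⟫ + ⟪deriv N t, n t⟫ = torsion3 γ t * b t := by
      rw [hN'n, hNn']; ring
    rw [this] at h
    exact h
  have hbd : ∀ t, HasDerivAt b (-(torsion3 γ t) * a t) t := by
    intro t
    have h := (hNd t).inner ℝ (hBd t)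
    obtain ⟨c, hc⟩ := hRodrigues t
    have hN'B : ⟪deriv N t, B t⟫ = 0 := by
      rw [hc, real_inner_smul_left, hTB t]; ring
    have hNB' : ⟪N t, B' t⟫ = -(torsion3 γ t) * a t := by
      rw [expand3 (g1 t) (n t) (N t) (B' t) (hT1 t) (hnn t) (hTn t)]
      have hBeq : cross3 (g1 t) (n t) = B t := by rw [hBdef]
      have hTB' : ⟪g1 t, B' t⟫ = 0 := by
        rw [hB'def]
        simp only [inner_add_right]
        have e1 : ⟪g1 t, cross3 (g1 t) (n' t)⟫ = 0 := by
          rw [real_inner_comm]; exact inner_cross_left _ _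
        have e2 : ⟪g1 t, cross3 (g2 t) (n t)⟫ = 0 := by
          have hz : cross3 (g2 t) (n t) = 0 := by
            show cross3 (g2 t) ((κ t)⁻¹ • g2 t) = 0
            rw [cross3_smul_right, cross3_self, smul_zero]
          rw [hz, inner_zero_right]
        rw [e1, e2]; ring
      rw [hBeq, hNorth t, hnB' t, hBB' t, hadef]
      ring
    have : ⟪N t, B' t⟫ + ⟪deriv N t, B t⟫ = -(torsion3 γ t) * a t := by
      rw [hN'B, hNB']; ring
    rw [this] at h
    exact h
  -- continuity of the torsion
  have hg3c : Continuous g3 := h3.2.continuous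
  have hcrossc : Continuous (fun t => cross3 (g1 t) (g2 t)) := by
    have hdiff : Differentiable ℝ (fun t => cross3 (g1 t) (g2 t)) := fun t =>
      (hasDerivAt_cross (hd1 t) (hd2 t)).differentiableAt
    exact hdiff.continuous
  have hnum : Continuous (fun t => ⟪cross3 (g1 t) (g2 t), g3 t⟫) :=
    Continuous.inner hcrossc hg3c
  have hκc : Continuous κ := (h3.1.continuous).norm
  have hτc : Continuous (fun t => torsion3 γ t) := by
    have hfun : (fun t => torsion3 γ t)
        = fun t => ⟪cross3 (g1 t) (g2 t), g3 t⟫ / κ t ^ 2 := funext hτ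
    rw [hfun]
    exact hnum.div ((hκc.pow 2)) (fun t => pow_ne_zero 2 (hκne t))
  -- the accumulated torsion
  set Θ : ℝ → ℝ := fun u => ∫ s in (0:ℝ)..u, torsion3 γ s with hΘdef
  have hΘd : ∀ t, HasDerivAt Θ (torsion3 γ t) t := fun t =>
    (hτc.integral_hasStrictDerivAt 0 t).hasDerivAt
  -- rotated coordinates are constant
  set P : ℝ → ℝ := fun s => a s * Real.cos (Θ s) - b s * Real.sin (Θ s) with hPdef
  set Q : ℝ → ℝ := fun s => a s * Real.sin (Θ s) + b s * Real.cos (Θ s) with hQdef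
  have hcos : ∀ t, HasDerivAt (fun s => Real.cos (Θ s)) (-Real.sin (Θ t) * torsion3 γ t) t :=
    fun t => (Real.hasDerivAt_cos (Θ t)).comp t (hΘd t)
  have hsin : ∀ t, HasDerivAt (fun s => Real.sin (Θ s)) (Real.cos (Θ t) * torsion3 γ t) t :=
    fun t => (Real.hasDerivAt_sin (Θ t)).comp t (hΘd t)
  have hPd : ∀ t, HasDerivAt P 0 t := by
    intro t
    have h := ((had t).mul (hcos t)).sub ((hbd t).mul (hsin t))
    rw [hPdef]
    refine h.congr_deriv ?_
    ring
  have hQd : ∀ t, HasDerivAt Q 0 t := by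
    intro t
    have h := ((had t).mul (hsin t)).add ((hbd t).mul (hcos t))
    rw [hQdef]
    refine h.congr_deriv ?_
    ring
  have hPc : P ℓ = P 0 :=
    is_const_of_deriv_eq_zero (fun t => (hPd t).differentiableAt)
      (fun t => (hPd t).deriv) ℓ 0
  have hQc : Q ℓ = Q 0 :=
    is_const_of_deriv_eq_zero (fun t => (hQd t).differentiableAt)
      (fun t => (hQd t).deriv) ℓ 0
  -- periodicity of the frame
  have hper1 : ∀ t, g1 (t + ℓ) = g1 t := by
    intro t
    have e : (fun x => γ (x + ℓ)) = γ := funext hclosed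
    rw [hg1def, ← deriv_comp_add_const, e]
  have hper2 : ∀ t, g2 (t + ℓ) = g2 t := by
    intro t
    have e : (fun x => g1 (x + ℓ)) = g1 := funext hper1
    rw [hg2def, ← deriv_comp_add_const, e]
  have hg1p : g1 ℓ = g1 0 := by have := hper1 0; rwa [zero_add] at this
  have hg2p : g2 ℓ = g2 0 := by have := hper2 0; rwa [zero_add] at this
  have hNp : N ℓ = N 0 := by have := hNclosed 0; rwa [zero_add] at this
  have hκp : κ ℓ = κ 0 := by rw [hκdef]; simp only [hg2p]
  have hnp : n ℓ = n 0 := by rw [hndef]; simp only [hg2p, hκp]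
  have hBp : B ℓ = B 0 := by rw [hBdef]; simp only [hg1p, hnp]
  have hap : a ℓ = a 0 := by rw [hadef]; simp only [hNp, hnp]
  have hbp : b ℓ = b 0 := by rw [hbdef]; simp only [hNp, hBp]
  -- evaluate
  have hΘ0 : Θ 0 = 0 := intervalIntegral.integral_same
  have e1 : a 0 * Real.cos (Θ ℓ) - b 0 * Real.sin (Θ ℓ) = a 0 := by
    have := hPc
    rw [hPdef] at this
    simp only [hap, hbp, hΘ0, Real.cos_zero, Real.sin_zero] at this
    linarith
  have e2 : a 0 * Real.sin (Θ ℓ) + b 0 * Real.cos (Θ ℓ) = b 0 := by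
    have := hQc
    rw [hQdef] at this
    simp only [hap, hbp, hΘ0, Real.cos_zero, Real.sin_zero] at this
    linarith
  have hab : a 0 ^ 2 + b 0 ^ 2 = 1 := by
    have hexp := expand3 (g1 0) (n 0) (N 0) (N 0) (hT1 0) (hnn 0) (hTn 0)
    have hBeq : cross3 (g1 0) (n 0) = B 0 := by rw [hBdef]
    have hNN : ⟪N 0, N 0⟫ = 1 := by
      rw [real_inner_self_eq_norm_mul_norm, hNunit 0]; norm_num
    have hTN : ⟪g1 0, N 0⟫ = 0 := by rw [real_inner_comm]; exact hNorth 0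
    have hnN : ⟪n 0, N 0⟫ = a 0 := by rw [real_inner_comm, hadef]
    have hBN : ⟪B 0, N 0⟫ = b 0 := by rw [real_inner_comm, hbdef]
    rw [hBeq, hNN, hNorth 0, hTN, hnN, hBN] at hexp
    have ha0 : ⟪N 0, n 0⟫ = a 0 := by rw [hadef]
    have hb0 : ⟪N 0, B 0⟫ = b 0 := by rw [hbdef]
    rw [ha0, hb0] at hexp
    rw [pow_two, pow_two]
    linarith [hexp]
  have hcos1 : Real.cos (Θ ℓ) = 1 := by
    have h1 : a 0 * Real.cos (Θ ℓ) - b 0 * Real.sin (Θ ℓ) - a 0 = 0 := by linarith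
    have h2 : a 0 * Real.sin (Θ ℓ) + b 0 * Real.cos (Θ ℓ) - b 0 = 0 := by linarith
    linear_combination (a 0) * h1 + (b 0) * h2 - (Real.cos (Θ ℓ) - 1) * hab
  obtain ⟨m, hm⟩ := (Real.cos_eq_one_iff (Θ ℓ)).mp hcos1
  refine ⟨m, ?_⟩
  have hΘℓ : Θ ℓ = ∫ t in (0:ℝ)..ℓ, torsion3 γ t := rfl
  rw [← hΘℓ, ← hm]
  ring
end

section
/- Let γ : ℝ → EuclideanSpace ℝ (Fin 3) be a smooth unit-speed curve, closed with period ℓ > 0, with nowhere-vanishing curvature κ(t) = ‖γ''(t)‖ > 0. Suppose N : ℝ → EuclideanSpace ℝ (Fin 3) is a smooth map with N(t + ℓ) = N(t), ‖N(t)‖ = 1, ⟨N(t), γ'(t)⟩ = 0 for all t, such that N'(t) is a scalar multiple of γ'(t) for every t, and suppose moreover that the normal curvature is positive: ⟨γ''(t), N(t)⟩ > 0 for all t (convexity of the surface along γ). Then the total torsion vanishes: ∫₀^ℓ τ(t) dt = 0, where τ(t) = ⟨γ'(t) ×₃ γ''(t), γ'''(t)⟩ / ‖γ''(t)‖². -/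
open scoped RealInnerProductSpace

section Aux

theorem TT_identA (t0 t1 t2 n0 n1 n2 v0 v1 v2 : ℝ)
    (hT : t0*t0+t1*t1+t2*t2 = 1) (hN : n0*n0+n1*n1+n2*n2 = 1)
    (hTN : t0*n0+t1*n1+t2*n2 = 0) (hTv : t0*v0+t1*v1+t2*v2 = 0) :
    v0*v0+v1*v1+v2*v2 = (v0*n0+v1*n1+v2*n2)^2
      + (v0*(t1*n2-t2*n1)+v1*(t2*n0-t0*n2)+v2*(t0*n1-t1*n0))^2 := by
  linear_combination
    ((v0*n0+v1*n1+v2*n2)^2 - (v0^2+v1^2+v2^2)) * hT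
    + (-((v0^2+v1^2+v2^2)*(t0^2+t1^2+t2^2))) * hN
    + ((v0^2+v1^2+v2^2)*(t0*n0+t1*n1+t2*n2)
         - 2*(t0*v0+t1*v1+t2*v2)*(v0*n0+v1*n1+v2*n2)) * hTN
    + ((n0^2+n1^2+n2^2)*(t0*v0+t1*v1+t2*v2)) * hTv

theorem TT_identB (t0 t1 t2 n0 n1 n2 v0 v1 v2 w0 w1 w2 : ℝ)
    (hT : t0*t0+t1*t1+t2*t2 = 1) (hN : n0*n0+n1*n1+n2*n2 = 1)
    (hTN : t0*n0+t1*n1+t2*n2 = 0) (hTv : t0*v0+t1*v1+t2*v2 = 0) :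
    (t1*v2-t2*v1)*w0+(t2*v0-t0*v2)*w1+(t0*v1-t1*v0)*w2
      = (v0*n0+v1*n1+v2*n2)
          * ((t1*n2-t2*n1)*w0+(t2*n0-t0*n2)*w1+(t0*n1-t1*n0)*w2)
        - (v0*(t1*n2-t2*n1)+v1*(t2*n0-t0*n2)+v2*(t0*n1-t1*n0))
          * (n0*w0+n1*w1+n2*w2) := by
  linear_combination
    (-((t1*v2-t2*v1)*w0+(t2*v0-t0*v2)*w1+(t0*v1-t1*v0)*w2)
      + (v0*n0+v1*n1+v2*n2)*((t1*n2-t2*n1)*w0+(t2*n0-t0*n2)*w1+(t0*n1-t1*n0)*w2)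
      - (v0*(t1*n2-t2*n1)+v1*(t2*n0-t0*n2)+v2*(t0*n1-t1*n0))*(n0*w0+n1*w1+n2*w2)) * hT
    + (-((t0^2+t1^2+t2^2)*((t1*v2-t2*v1)*w0+(t2*v0-t0*v2)*w1+(t0*v1-t1*v0)*w2))) * hN
    + ((t0*n0+t1*n1+t2*n2)*((t1*v2-t2*v1)*w0+(t2*v0-t0*v2)*w1+(t0*v1-t1*v0)*w2)
      + (v0*(t1*n2-t2*n1)+v1*(t2*n0-t0*n2)+v2*(t0*n1-t1*n0))*(t0*w0+t1*w1+t2*w2)) * hTN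
    + (-((t1*n2-t2*n1)*w0+(t2*n0-t0*n2)*w1+(t0*n1-t1*n0)*w2)*(t0*n0+t1*n1+t2*n2)) * hTv

noncomputable def TT_crossL :
    EuclideanSpace ℝ (Fin 3) →ₗ[ℝ] EuclideanSpace ℝ (Fin 3) →ₗ[ℝ] EuclideanSpace ℝ (Fin 3) :=
  ((crossProduct.compl₁₂ (WithLp.linearEquiv 2 ℝ (Fin 3 → ℝ)).toLinearMap
      (WithLp.linearEquiv 2 ℝ (Fin 3 → ℝ)).toLinearMap).compr₂
    (WithLp.linearEquiv 2 ℝ (Fin 3 → ℝ)).symm.toLinearMap)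

noncomputable def TT_crossE :
    EuclideanSpace ℝ (Fin 3) →L[ℝ] EuclideanSpace ℝ (Fin 3) →L[ℝ] EuclideanSpace ℝ (Fin 3) :=
  LinearMap.toContinuousLinearMap
    ((LinearMap.toContinuousLinearMap :
        (EuclideanSpace ℝ (Fin 3) →ₗ[ℝ] EuclideanSpace ℝ (Fin 3)) ≃ₗ[ℝ]
          (EuclideanSpace ℝ (Fin 3) →L[ℝ] EuclideanSpace ℝ (Fin 3))).toLinearMap.comp TT_crossL)

lemma TT_crossE_eq (x y : EuclideanSpace ℝ (Fin 3)) : TT_crossE x y =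
    (WithLp.equiv 2 (Fin 3 → ℝ)).symm
      (crossProduct (WithLp.equiv 2 (Fin 3 → ℝ) x) (WithLp.equiv 2 (Fin 3 → ℝ) y)) := rfl

lemma TT_crossE_apply0 (x y : EuclideanSpace ℝ (Fin 3)) :
    TT_crossE x y 0 = x 1 * y 2 - x 2 * y 1 := by
  show (crossProduct (WithLp.equiv 2 (Fin 3 → ℝ) x) (WithLp.equiv 2 (Fin 3 → ℝ) y)) 0 = _
  simp [cross_apply]

lemma TT_crossE_apply1 (x y : EuclideanSpace ℝ (Fin 3)) :
    TT_crossE x y 1 = x 2 * y 0 - x 0 * y 2 := by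
  show (crossProduct (WithLp.equiv 2 (Fin 3 → ℝ) x) (WithLp.equiv 2 (Fin 3 → ℝ) y)) 1 = _
  simp [cross_apply]

lemma TT_crossE_apply2 (x y : EuclideanSpace ℝ (Fin 3)) :
    TT_crossE x y 2 = x 0 * y 1 - x 1 * y 0 := by
  show (crossProduct (WithLp.equiv 2 (Fin 3 → ℝ) x) (WithLp.equiv 2 (Fin 3 → ℝ) y)) 2 = _
  simp [cross_apply]

lemma TT_inner3 (x y : EuclideanSpace ℝ (Fin 3)) :
    ⟪x, y⟫ = x 0 * y 0 + x 1 * y 1 + x 2 * y 2 := by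
  simp [PiLp.inner_apply, RCLike.inner_apply, Fin.sum_univ_three]
  ring

lemma TT_hasDerivAt_crossE {φ ψ : ℝ → EuclideanSpace ℝ (Fin 3)}
    {φ' ψ' : EuclideanSpace ℝ (Fin 3)} {t : ℝ}
    (hφ : HasDerivAt φ φ' t) (hψ : HasDerivAt ψ ψ' t) :
    HasDerivAt (fun s => TT_crossE (φ s) (ψ s))
      (TT_crossE φ' (ψ t) + TT_crossE (φ t) ψ') t := by
  have h1 : HasDerivAt (fun s => TT_crossE (φ s)) (TT_crossE φ') t :=
    TT_crossE.hasFDerivAt.comp_hasDerivAt t hφ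
  exact h1.clm_apply hψ

lemma TT_inner_crossE_self (x y : EuclideanSpace ℝ (Fin 3)) :
    ⟪x, TT_crossE x y⟫ = 0 := by
  rw [TT_inner3, TT_crossE_apply0, TT_crossE_apply1, TT_crossE_apply2]; ring

lemma TT_crossE_self (x : EuclideanSpace ℝ (Fin 3)) : TT_crossE x x = 0 := by
  rw [TT_crossE_eq, cross_self]
  rfl

end Aux

/-- The total torsion of a closed line of curvature of a *convex* oriented surface
in `ℝ³` vanishes. -/
theorem total_torsion_of_closed_line_of_curvature_convex
    (γ : ℝ → EuclideanSpace ℝ (Fin 3)) (ℓ : ℝ) (hℓ : 0 < ℓ)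
    (hsmooth : ContDiff ℝ (⊤ : ℕ∞) γ)
    (hunit : ∀ t, ‖deriv γ t‖ = 1)
    (hclosed : ∀ t, γ (t + ℓ) = γ t)
    (hcurv : ∀ t, ‖deriv (deriv γ) t‖ > 0)
    (N : ℝ → EuclideanSpace ℝ (Fin 3))
    (hNsmooth : ContDiff ℝ (⊤ : ℕ∞) N)
    (hNclosed : ∀ t, N (t + ℓ) = N t)
    (hNunit : ∀ t, ‖N t‖ = 1)
    (hNorth : ∀ t, ⟪N t, deriv γ t⟫ = 0)
    (hRodrigues : ∀ t, ∃ c : ℝ, deriv N t = c • deriv γ t)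
    (hconvex : ∀ t, ⟪deriv (deriv γ) t, N t⟫ > 0) :
    ∫ t in (0:ℝ)..ℓ, torsion3 γ t = 0 := by
  set T : ℝ → EuclideanSpace ℝ (Fin 3) := deriv γ with hTdef
  set v : ℝ → EuclideanSpace ℝ (Fin 3) := deriv T with hvdef
  set w : ℝ → EuclideanSpace ℝ (Fin 3) := deriv v with hwdef
  -- smoothness chain
  have hsγ : Differentiable ℝ γ := hsmooth.differentiable (by simp)
  have hsT : ContDiff ℝ (⊤ : ℕ∞) T := (contDiff_infty_iff_deriv.mp hsmooth).2
  have hdT : Differentiable ℝ T := hsT.differentiable (by simp)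
  have hsv : ContDiff ℝ (⊤ : ℕ∞) v := (contDiff_infty_iff_deriv.mp hsT).2
  have hdv : Differentiable ℝ v := hsv.differentiable (by simp)
  have hsw : ContDiff ℝ (⊤ : ℕ∞) w := (contDiff_infty_iff_deriv.mp hsv).2
  have hdN : Differentiable ℝ N := hNsmooth.differentiable (by simp)
  have hT' : ∀ t, HasDerivAt T (v t) t := fun t => (hdT t).hasDerivAt
  have hv' : ∀ t, HasDerivAt v (w t) t := fun t => (hdv t).hasDerivAt
  have hN' : ∀ t, HasDerivAt N (deriv N t) t := fun t => (hdN t).hasDerivAt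
  -- ⟪v, T⟫ = 0
  have hTT : ∀ t, ⟪T t, T t⟫ = (1:ℝ) := by
    intro t; rw [real_inner_self_eq_norm_sq, hunit t]; norm_num
  have hvT : ∀ t, ⟪v t, T t⟫ = 0 := by
    intro t
    have h1 : HasDerivAt (fun s => ⟪T s, T s⟫) (⟪T t, v t⟫ + ⟪v t, T t⟫) t :=
      (hT' t).inner ℝ (hT' t)
    have h3 : (fun s => ⟪T s, T s⟫) = fun _ : ℝ => (1:ℝ) := funext hTT
    rw [h3] at h1
    have h4 := h1.unique (hasDerivAt_const t (1:ℝ))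
    have h5 : ⟪T t, v t⟫ = ⟪v t, T t⟫ := real_inner_comm _ _
    linarith
  -- the auxiliary frame field and scalar functions
  set M : ℝ → EuclideanSpace ℝ (Fin 3) := fun t => TT_crossE (T t) (N t) with hMdef
  set f : ℝ → ℝ := fun t => ⟪v t, N t⟫ with hfdef
  set g : ℝ → ℝ := fun t => ⟪v t, M t⟫ with hgdef
  have hfpos : ∀ t, 0 < f t := hconvex
  have hM' : ∀ t, HasDerivAt M (TT_crossE (v t) (N t) + TT_crossE (T t) (deriv N t)) t :=
    fun t => TT_hasDerivAt_crossE (hT' t) (hN' t)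
  have hf' : ∀ t, HasDerivAt f (⟪w t, N t⟫) t := by
    intro t
    obtain ⟨c, hc⟩ := hRodrigues t
    have h1 : HasDerivAt f (⟪v t, deriv N t⟫ + ⟪w t, N t⟫) t := (hv' t).inner ℝ (hN' t)
    have h2 : ⟪v t, deriv N t⟫ = 0 := by
      rw [hc, real_inner_smul_right, hvT t, mul_zero]
    rwa [h2, zero_add] at h1
  have hg' : ∀ t, HasDerivAt g (⟪w t, M t⟫) t := by
    intro t
    obtain ⟨c, hc⟩ := hRodrigues t
    have h1 : HasDerivAt g
        (⟪v t, TT_crossE (v t) (N t) + TT_crossE (T t) (deriv N t)⟫ + ⟪w t, M t⟫) t :=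
      (hv' t).inner ℝ (hM' t)
    have h2 : ⟪v t, TT_crossE (v t) (N t) + TT_crossE (T t) (deriv N t)⟫ = 0 := by
      rw [inner_add_right, TT_inner_crossE_self, hc, map_smul, real_inner_smul_right,
        TT_crossE_self]
      simp
    rwa [h2, zero_add] at h1
  -- component-level hypotheses
  have hTTc : ∀ t, T t 0 * T t 0 + T t 1 * T t 1 + T t 2 * T t 2 = 1 := by
    intro t; have := hTT t; rwa [TT_inner3] at this
  have hNNc : ∀ t, N t 0 * N t 0 + N t 1 * N t 1 + N t 2 * N t 2 = 1 := by
    intro t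
    have : ⟪N t, N t⟫ = (1:ℝ) := by rw [real_inner_self_eq_norm_sq, hNunit t]; norm_num
    rwa [TT_inner3] at this
  have hTNc : ∀ t, T t 0 * N t 0 + T t 1 * N t 1 + T t 2 * N t 2 = 0 := by
    intro t; have := hNorth t; rw [TT_inner3] at this; linear_combination this
  have hTvc : ∀ t, T t 0 * v t 0 + T t 1 * v t 1 + T t 2 * v t 2 = 0 := by
    intro t; have := hvT t; rw [TT_inner3] at this; linear_combination this
  -- identity A : ‖v‖² = f² + g²
  have hA : ∀ t, ‖v t‖ ^ 2 = f t ^ 2 + g t ^ 2 := by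
    intro t
    have key := TT_identA (T t 0) (T t 1) (T t 2) (N t 0) (N t 1) (N t 2)
      (v t 0) (v t 1) (v t 2) (hTTc t) (hNNc t) (hTNc t) (hTvc t)
    rw [← real_inner_self_eq_norm_sq, TT_inner3, hfdef, hgdef]
    simp only [TT_inner3, hMdef, TT_crossE_apply0, TT_crossE_apply1, TT_crossE_apply2]
    linear_combination key
  -- identity B : the torsion numerator
  have hB : ∀ t, ⟪TT_crossE (T t) (v t), w t⟫ = f t * ⟪w t, M t⟫ - g t * ⟪w t, N t⟫ := by
    intro t
    have key := TT_identB (T t 0) (T t 1) (T t 2) (N t 0) (N t 1) (N t 2)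
      (v t 0) (v t 1) (v t 2) (w t 0) (w t 1) (w t 2)
      (hTTc t) (hNNc t) (hTNc t) (hTvc t)
    simp only [TT_inner3, hfdef, hgdef, hMdef,
      TT_crossE_apply0, TT_crossE_apply1, TT_crossE_apply2]
    linear_combination key
  -- torsion as a quotient
  have htors : ∀ t, torsion3 γ t
      = (f t * ⟪w t, M t⟫ - g t * ⟪w t, N t⟫) / (f t ^ 2 + g t ^ 2) := by
    intro t
    have : torsion3 γ t = ⟪TT_crossE (T t) (v t), w t⟫ / ‖v t‖ ^ 2 := rfl
    rw [this, hB t, hA t]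
  have hfgpos : ∀ t, 0 < f t ^ 2 + g t ^ 2 := by
    intro t; have := hfpos t; positivity
  -- the antiderivative
  set h : ℝ → ℝ := fun t => Real.arctan (g t / f t) with hhdef
  have hh : ∀ t, HasDerivAt h (torsion3 γ t) t := by
    intro t
    have hfne : f t ≠ 0 := ne_of_gt (hfpos t)
    have hq : HasDerivAt (fun s => g s / f s)
        ((⟪w t, M t⟫ * f t - g t * ⟪w t, N t⟫) / (f t) ^ 2) t :=
      (hg' t).div (hf' t) hfne
    have harc := (Real.hasDerivAt_arctan (g t / f t)).comp t hq
    refine harc.congr_deriv ?_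
    rw [htors t]
    have hden : (0:ℝ) < 1 + (g t / f t) ^ 2 := by positivity
    field_simp
  -- continuity and integrability of the torsion
  have hMcont : Continuous M := by
    have : Differentiable ℝ M := fun t => (hM' t).differentiableAt
    exact this.continuous
  have hfcont : Continuous f := by
    have : Differentiable ℝ f := fun t => (hf' t).differentiableAt
    exact this.continuous
  have hgcont : Continuous g := by
    have : Differentiable ℝ g := fun t => (hg' t).differentiableAt
    exact this.continuous
  have hwcont : Continuous w := hsw.continuous
  have hNcont : Continuous N := hNsmooth.continuous
  have htcont : Continuous (torsion3 γ) := by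
    rw [funext htors]
    refine Continuous.div ?_ ?_ (fun t => ne_of_gt (hfgpos t))
    · exact (hfcont.mul (hwcont.inner hMcont)).sub (hgcont.mul (hwcont.inner hNcont))
    · exact (hfcont.pow 2).add (hgcont.pow 2)
  have hint : IntervalIntegrable (torsion3 γ) MeasureTheory.volume 0 ℓ :=
    htcont.intervalIntegrable 0 ℓ
  -- fundamental theorem of calculus
  have hFTC := intervalIntegral.integral_eq_sub_of_hasDerivAt
    (f := h) (f' := torsion3 γ) (fun t _ => hh t) hint
  rw [hFTC]
  -- periodicity
  have hTper : ∀ t, T (t + ℓ) = T t := by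
    intro t
    have h1 : (fun s => γ (s + ℓ)) = γ := funext hclosed
    have h2 : deriv (fun s => γ (s + ℓ)) t = deriv γ (t + ℓ) := deriv_comp_add_const ..
    rw [h1] at h2
    exact h2.symm
  have hvper : ∀ t, v (t + ℓ) = v t := by
    intro t
    have h1 : (fun s => T (s + ℓ)) = T := funext hTper
    have h2 : deriv (fun s => T (s + ℓ)) t = deriv T (t + ℓ) := deriv_comp_add_const ..
    rw [h1] at h2
    exact h2.symm
  have hTl : T ℓ = T 0 := by have := hTper 0; rwa [zero_add] at this
  have hvl : v ℓ = v 0 := by have := hvper 0; rwa [zero_add] at this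
  have hNl : N ℓ = N 0 := by have := hNclosed 0; rwa [zero_add] at this
  have hfl : f ℓ = f 0 := by rw [hfdef]; simp only [hvl, hNl]
  have hgl : g ℓ = g 0 := by rw [hgdef]; simp only [hvl, hNl, hMdef, hTl]
  rw [hhdef]
  simp only [hfl, hgl, sub_self]
end

section
/- Let m ≥ 3, let γ : ℝ → EuclideanSpace ℝ (Fin m) be a smooth unit-speed curve, let N be a unit normal field along γ, and let H₁, …, H_{m-2} : ℝ → EuclideanSpace ℝ (Fin m) be smooth maps such that (γ'(t), H₁(t), …, H_{m-2}(t), N(t)) is an orthonormal basis of EuclideanSpace ℝ (Fin m) for every t. Set τ_g^j(t) = -⟨N'(t), H_j(t)⟩ and μ_j(t) = ⟨H_j'(t), H₁(t)⟩. Let θ : ℝ → ℝ be smooth, N(θ)(t) = -sin(θ(t)) H₁(t) + cos(θ(t)) N(t), and H₁(θ)(t) = cos(θ(t)) H₁(t) + sin(θ(t)) N(t). Then for every t the negative of the orthogonal projection of (N(θ))'(t) onto the orthogonal complement of span{γ'(t), N(θ)(t)} equals (θ'(t) + τ_g¹(t)) H₁(θ)(t) + Σ_{j=2}^{m-2} (τ_g^j(t)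 cos θ(t) − μ_j(t) sin θ(t)) H_j(t). -/
open scoped RealInnerProductSpace

section Aux
variable {E : Type*} [NormedAddCommGroup E] [InnerProductSpace ℝ E]

lemma mem_orthogonal_span' {S : Set E} {v : E} (h : ∀ u ∈ S, ⟪u, v⟫ = 0) :
    v ∈ (Submodule.span ℝ S)ᗮ := by
  rw [Submodule.mem_orthogonal]
  intro u hu
  induction hu using Submodule.span_induction with
  | mem x hx => exact h x hx
  | zero => simp
  | add x y _ _ hx hy => simp [inner_add_left, hx, hy]
  | smul a x _ hx => simp [inner_smul_left, hx]

lemma proj_span_pair_orth [FiniteDimensional ℝ E] (e Z x : E)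
    (he : ⟪e, e⟫ = 1) (hZ : ⟪Z, Z⟫ = 1) (heZ : ⟪e, Z⟫ = 0) :
    (Submodule.orthogonalProjectionOnto ((Submodule.span ℝ {e, Z})ᗮ) x : E)
      = x - ⟪e, x⟫ • e - ⟪Z, x⟫ • Z := by
  refine Submodule.eq_starProjection_of_mem_orthogonal ?_ ?_
  · apply mem_orthogonal_span'
    intro u hu
    rcases hu with rfl | rfl
    · simp only [inner_sub_right, real_inner_smul_right, he, heZ, mul_one, mul_zero, sub_zero, sub_self]
    · have h2 : ⟪u, e⟫ = 0 := by rw [real_inner_comm]; exact heZ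
      simp only [inner_sub_right, real_inner_smul_right, hZ, h2, mul_one, mul_zero, sub_zero, sub_self]
  · have hrw : x - (x - ⟪e, x⟫ • e - ⟪Z, x⟫ • Z) = ⟪e, x⟫ • e + ⟪Z, x⟫ • Z := by
      abel
    rw [hrw]
    exact Submodule.le_orthogonal_orthogonal _
      (Submodule.add_mem _
        (Submodule.smul_mem _ _ (Submodule.subset_span (by simp)))
        (Submodule.smul_mem _ _ (Submodule.subset_span (by simp))))

lemma deriv_inner_const {f g : ℝ → E} (hf : Differentiable ℝ f) (hg : Differentiable ℝ g)
    {c : ℝ} (h : ∀ s, ⟪f s, g s⟫ = c) (t : ℝ) :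
    ⟪f t, deriv g t⟫ + ⟪deriv f t, g t⟫ = 0 := by
  have h1 : HasDerivAt (fun s => ⟪f s, g s⟫) (⟪f t, deriv g t⟫ + ⟪deriv f t, g t⟫) t :=
    (hf t).hasDerivAt.inner ℝ (hg t).hasDerivAt
  have h2 : HasDerivAt (fun s => ⟪f s, g s⟫) 0 t := by
    simp_rw [h]; exact hasDerivAt_const t c
  exact h1.unique h2

end Aux

/-- Orthogonal projection onto the orthogonal complement of
`span{γ'(t), Z(t)}` in `EuclideanSpace ℝ (Fin m)`. -/
noncomputable def projH {m : ℕ} (γ Z : ℝ → EuclideanSpace ℝ (Fin m)) (t : ℝ)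
    (x : EuclideanSpace ℝ (Fin m)) : EuclideanSpace ℝ (Fin m) :=
  (Submodule.orthogonalProjectionOnto ((Submodule.span ℝ {deriv γ t, Z t})ᗮ) x :
    EuclideanSpace ℝ (Fin m))

/-- Rotating the normal: the geodesic torsion vector of `γ` with respect to the rotated
normal `N(θ) = -sin θ · H₁ + cos θ · N` equals
`(θ' + τ_g¹) H₁(θ) + Σ_{j≥2} (τ_g^j cos θ − μ_j sin θ) H_j`. -/
theorem geodesicTorsionVector_of_rotated_normal
    (m : ℕ) (hm : 3 ≤ m)
    (γ : ℝ → EuclideanSpace ℝ (Fin m))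
    (hsmooth : ContDiff ℝ (⊤ : ℕ∞) γ)
    (hunit : ∀ t, ‖deriv γ t‖ = 1)
    (N : ℝ → EuclideanSpace ℝ (Fin m))
    (hNsmooth : ContDiff ℝ (⊤ : ℕ∞) N)
    (hNunit : ∀ t, ‖N t‖ = 1)
    (hNorth : ∀ t, ⟪N t, deriv γ t⟫ = 0)
    (H : Fin (m - 2) → ℝ → EuclideanSpace ℝ (Fin m))
    (hHsmooth : ∀ j, ContDiff ℝ (⊤ : ℕ∞) (H j))
    (hHunit : ∀ j t, ‖H j t‖ = 1)
    (hHγ : ∀ j t, ⟪H j t, deriv γ t⟫ = 0)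
    (hHN : ∀ j t, ⟪H j t, N t⟫ = 0)
    (hHH : ∀ j k, j ≠ k → ∀ t, ⟪H j t, H k t⟫ = 0)
    (hspan : ∀ t,
      Submodule.span ℝ ({deriv γ t, N t} ∪ Set.range fun j => H j t) = ⊤)
    (θ : ℝ → ℝ) (hθ : ContDiff ℝ (⊤ : ℕ∞) θ) :
    ∀ t,
      -projH γ (fun s => -Real.sin (θ s) • H ⟨0, by omega⟩ s + Real.cos (θ s) • N s) t
          (deriv (fun s => -Real.sin (θ s) • H ⟨0, by omega⟩ s + Real.cos (θ s) • N s) t) =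
        (deriv θ t + -⟪deriv N t, H ⟨0, by omega⟩ t⟫) •
            (Real.cos (θ t) • H ⟨0, by omega⟩ t + Real.sin (θ t) • N t) +
          ∑ j ∈ Finset.univ.erase (⟨0, by omega⟩ : Fin (m - 2)),
            (-⟪deriv N t, H j t⟫ * Real.cos (θ t) -
              ⟪deriv (H j) t, H ⟨0, by omega⟩ t⟫ * Real.sin (θ t)) • H j t := by
  intro t
  set j0 : Fin (m - 2) := ⟨0, by omega⟩ with hj0def
  -- differentiability
  have hNdiff : Differentiable ℝ N := hNsmooth.differentiable (by simp)
  have hHdiff : ∀ j, Differentiable ℝ (H j) := fun j => (hHsmooth j).differentiable (by simp)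
  have hθd : HasDerivAt θ (deriv θ t) t := ((hθ.differentiable (by simp)) t).hasDerivAt
  have hsin : HasDerivAt (fun s => Real.sin (θ s)) (Real.cos (θ t) * deriv θ t) t :=
    (Real.hasDerivAt_sin (θ t)).comp t hθd
  have hcos : HasDerivAt (fun s => Real.cos (θ s)) (-Real.sin (θ t) * deriv θ t) t :=
    (Real.hasDerivAt_cos (θ t)).comp t hθd
  have hZd : HasDerivAt (fun s => -Real.sin (θ s) • H j0 s + Real.cos (θ s) • N s)
      ((-Real.sin (θ t) • deriv (H j0) t + (-(Real.cos (θ t) * deriv θ t)) • H j0 t)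
        + (Real.cos (θ t) • deriv N t + (-Real.sin (θ t) * deriv θ t) • N t)) t :=
    (hsin.neg.smul ((hHdiff j0) t).hasDerivAt).add (hcos.smul ((hNdiff t).hasDerivAt))
  have hx : deriv (fun s => -Real.sin (θ s) • H j0 s + Real.cos (θ s) • N s) t
      = (-Real.sin (θ t) • deriv (H j0) t + (-(Real.cos (θ t) * deriv θ t)) • H j0 t)
        + (Real.cos (θ t) • deriv N t + (-Real.sin (θ t) * deriv θ t) • N t) := hZd.deriv
  -- basic inner product facts
  have hee : ⟪deriv γ t, deriv γ t⟫ = 1 := by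
    rw [real_inner_self_eq_norm_mul_norm, hunit t, one_mul]
  have hnn : ⟪N t, N t⟫ = 1 := by
    rw [real_inner_self_eq_norm_mul_norm, hNunit t, one_mul]
  have hjj : ∀ j, ⟪H j t, H j t⟫ = 1 := fun j => by
    rw [real_inner_self_eq_norm_mul_norm, hHunit j t, one_mul]
  have hej : ∀ j, ⟪deriv γ t, H j t⟫ = 0 := fun j => by
    rw [real_inner_comm]; exact hHγ j t
  have hen : ⟪deriv γ t, N t⟫ = 0 := by rw [real_inner_comm]; exact hNorth t
  have hnj : ∀ j, ⟪N t, H j t⟫ = 0 := fun j => by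
    rw [real_inner_comm]; exact hHN j t
  have hnn' : ⟪N t, deriv N t⟫ = 0 := by
    have h1 := deriv_inner_const hNdiff hNdiff (fun s => by
      rw [real_inner_self_eq_norm_mul_norm, hNunit s, one_mul]) t
    have h2 : ⟪deriv N t, N t⟫ = ⟪N t, deriv N t⟫ := real_inner_comm _ _
    linarith
  have hjj' : ∀ j, ⟪H j t, deriv (H j) t⟫ = 0 := fun j => by
    have h1 := deriv_inner_const (hHdiff j) (hHdiff j) (fun s => by
      rw [real_inner_self_eq_norm_mul_norm, hHunit j s, one_mul]) t
    have h2 : ⟪deriv (H j) t, H j t⟫ = ⟪H j t, deriv (H j) t⟫ := real_inner_comm _ _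
    linarith
  have hjn' : ∀ j, ⟪H j t, deriv N t⟫ + ⟪deriv (H j) t, N t⟫ = 0 := fun j =>
    deriv_inner_const (hHdiff j) hNdiff (fun s => hHN j s) t
  have hnh0' : ∀ j, ⟪N t, deriv (H j) t⟫ = -⟪deriv N t, H j t⟫ := fun j => by
    have h1 := hjn' j
    have h2 : ⟪N t, deriv (H j) t⟫ = ⟪deriv (H j) t, N t⟫ := real_inner_comm _ _
    have h3 : ⟪H j t, deriv N t⟫ = ⟪deriv N t, H j t⟫ := real_inner_comm _ _
    linarith
  have hjh0' : ∀ j, j ≠ j0 → ⟪H j t, deriv (H j0) t⟫ = -⟪deriv (H j) t, H j0 t⟫ := by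
    intro j hj
    have h1 := deriv_inner_const (hHdiff j) (hHdiff j0) (fun s => hHH j j0 hj s) t
    linarith
  have hh0n' : ∀ j, ⟪H j t, deriv N t⟫ = ⟪deriv N t, H j t⟫ := fun j => real_inner_comm _ _
  -- projection data
  have hZZ : ⟪(-Real.sin (θ t) • H j0 t + Real.cos (θ t) • N t : EuclideanSpace ℝ (Fin m)),
      -Real.sin (θ t) • H j0 t + Real.cos (θ t) • N t⟫ = 1 := by
    simp only [inner_add_left, inner_add_right, real_inner_smul_left, real_inner_smul_right,
      hjj, hnn, hHN, hnj]
    nlinarith [Real.sin_sq_add_cos_sq (θ t)]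
  have heZ : ⟪deriv γ t,
      (-Real.sin (θ t) • H j0 t + Real.cos (θ t) • N t : EuclideanSpace ℝ (Fin m))⟫ = 0 := by
    simp only [inner_add_right, real_inner_smul_right, hej, hen, mul_zero, add_zero]
  have hZX : ⟪(-Real.sin (θ t) • H j0 t + Real.cos (θ t) • N t : EuclideanSpace ℝ (Fin m)),
      (-Real.sin (θ t) • deriv (H j0) t + (-(Real.cos (θ t) * deriv θ t)) • H j0 t)
        + (Real.cos (θ t) • deriv N t + (-Real.sin (θ t) * deriv θ t) • N t)⟫ = 0 := by
    simp only [inner_add_left, inner_add_right, real_inner_smul_left, real_inner_smul_right,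
      hjj, hnn, hHN, hnj, hnn', hjj', hnh0', hh0n']
    ring
  simp only [projH]
  rw [proj_span_pair_orth _ _ _ hee hZZ heZ, hx, hZX, zero_smul, sub_zero, ← sub_eq_zero,
    ← Submodule.mem_bot (R := ℝ), ← Submodule.top_orthogonal_eq_bot, ← hspan t]
  apply mem_orthogonal_span'
  intro u hu
  simp only [Set.mem_union, Set.mem_insert_iff, Set.mem_singleton_iff, Set.mem_range] at hu
  rcases hu with (rfl | rfl) | ⟨j, rfl⟩
  · -- u = deriv γ t
    simp only [inner_sub_right, inner_add_right, inner_neg_right, real_inner_smul_right,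
      inner_sum, hee, hej, hen]
    simp only [mul_zero, mul_one, Finset.sum_const_zero]
    ring
  · -- u = N t
    simp only [inner_sub_right, inner_add_right, inner_neg_right, real_inner_smul_right,
      inner_sum, hnn, hnj, hnn', hnh0', hNorth t]
    simp only [mul_zero, mul_one, Finset.sum_const_zero]
    ring
  · -- u = H j t
    by_cases hc : j = j0
    · subst hc
      have hsum0 : ⟪H j0 t, ∑ x ∈ Finset.univ.erase j0,
          (-⟪deriv N t, H x t⟫ * Real.cos (θ t) -
            ⟪deriv (H x) t, H j0 t⟫ * Real.sin (θ t)) • H x t⟫ = 0 := by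
        rw [inner_sum]
        apply Finset.sum_eq_zero
        intro k hk
        rw [real_inner_smul_right, hHH j0 k (fun h => (Finset.mem_erase.mp hk).1 h.symm) t,
          mul_zero]
      simp only [hsum0, inner_sub_right, inner_add_right, inner_neg_right,
        real_inner_smul_right, hjj, hjj', hHγ j0 t, hHN j0 t, hh0n']
      simp only [mul_zero, mul_one]
      ring
    · have hjh0 : ⟪H j t, H j0 t⟫ = 0 := hHH j j0 hc t
      simp only [inner_sub_right, inner_add_right, inner_neg_right, real_inner_smul_right,
        inner_sum, hjj, hjj', hHγ j t, hHN j t, hh0n', hjh0, hjh0' j hc]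
      rw [Finset.sum_eq_single_of_mem j
        (Finset.mem_erase.mpr ⟨hc, Finset.mem_univ j⟩) ?side]
      · simp only [hjj, mul_one]
        ring
      case side =>
        intro k _ hkj
        rw [hHH j k (Ne.symm hkj) t, mul_zero]
end

section
/- Let m ≥ 3, let γ : ℝ → EuclideanSpace ℝ (Fin m) be a smooth unit-speed curve, and let N be a unit normal field along γ such that N'(t) is a scalar multiple of γ'(t) for every t (γ is a line of curvature with respect to N). Let H be a smooth map with ‖H(t)‖ = 1 and H(t) ∈ ℋ(N)_t for all t, which is parallel in ℋ(N) (π_{ℋ(N)_t}(H'(t)) = 0 for all t), and let θ : ℝ → ℝ be smooth. Set N(θ)(t) = -sin(θ(t)) H(t) + cos(θ(t)) N(t) and H₁(θ)(t) = cos(θ(t)) H(t) + sin(θ(t)) N(t). Then for every t the geodesic torsion vector of γ with respect to N(θ) satisfies -π_{ℋ(N(θ))_t}((N(θ))'(t)) = θ'(t) · H₁(θ)(t). -/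
open scoped RealInnerProductSpace

/-- If `γ` is a line of curvature with respect to `N` and `N(θ)` is a parallel rotation
of `N`, then the geodesic torsion vector of `γ` with respect to `N(θ)` is `θ' H₁(θ)`. -/
theorem geodesicTorsionVector_of_parallel_rotation
    (m : ℕ) (hm : 3 ≤ m)
    (γ : ℝ → EuclideanSpace ℝ (Fin m))
    (hsmooth : ContDiff ℝ (⊤ : ℕ∞) γ)
    (hunit : ∀ t, ‖deriv γ t‖ = 1)
    (N : ℝ → EuclideanSpace ℝ (Fin m))
    (hNsmooth : ContDiff ℝ (⊤ : ℕ∞) N)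
    (hNunit : ∀ t, ‖N t‖ = 1)
    (hNorth : ∀ t, ⟪N t, deriv γ t⟫ = 0)
    (hRodrigues : ∀ t, ∃ c : ℝ, deriv N t = c • deriv γ t)
    (H : ℝ → EuclideanSpace ℝ (Fin m))
    (hHsmooth : ContDiff ℝ (⊤ : ℕ∞) H)
    (hHunit : ∀ t, ‖H t‖ = 1)
    (hHmem : ∀ t, H t ∈ (Submodule.span ℝ {deriv γ t, N t})ᗮ)
    (hHparallel : ∀ t, projH γ N t (deriv H t) = 0)
    (θ : ℝ → ℝ) (hθ : ContDiff ℝ (⊤ : ℕ∞) θ) :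
    ∀ t,
      -projH γ (fun s => -Real.sin (θ s) • H s + Real.cos (θ s) • N s) t
          (deriv (fun s => -Real.sin (θ s) • H s + Real.cos (θ s) • N s) t) =
        deriv θ t • (Real.cos (θ t) • H t + Real.sin (θ t) • N t) := by
  intro t
  obtain ⟨c, hc⟩ := hRodrigues t
  have hNd : ∀ s, HasDerivAt N (deriv N s) s := fun s =>
    ((hNsmooth.differentiable (by simp)).differentiableAt).hasDerivAt
  have hHd : ∀ s, HasDerivAt H (deriv H s) s := fun s =>
    ((hHsmooth.differentiable (by simp)).differentiableAt).hasDerivAt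
  have hθd : HasDerivAt θ (deriv θ t) t :=
    ((hθ.differentiable (by simp)).differentiableAt).hasDerivAt
  -- basic inner products
  have hHorth : ∀ s, ∀ u ∈ Submodule.span ℝ {deriv γ s, N s}, ⟪u, H s⟫ = 0 :=
    fun s => (Submodule.mem_orthogonal _ _).mp (hHmem s)
  have hTH : ⟪deriv γ t, H t⟫ = 0 :=
    hHorth t _ (Submodule.subset_span (by simp))
  have hNH : ∀ s, ⟪N s, H s⟫ = 0 := fun s =>
    hHorth s _ (Submodule.subset_span (by simp))
  have hTN : ⟪deriv γ t, N t⟫ = 0 := by rw [real_inner_comm]; exact hNorth t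
  have hHH : ⟪H t, H t⟫ = 1 := by
    rw [real_inner_self_eq_norm_sq, hHunit t]; norm_num
  have hNN : ⟪N t, N t⟫ = 1 := by
    rw [real_inner_self_eq_norm_sq, hNunit t]; norm_num
  -- deriv H t is a multiple of deriv γ t
  have hH'mem : deriv H t ∈ Submodule.span ℝ {deriv γ t, N t} := by
    have h1 := Submodule.sub_starProjection_mem_orthogonal
      (K := (Submodule.span ℝ {deriv γ t, N t})ᗮ) (deriv H t)
    rw [show (Submodule.starProjection ((Submodule.span ℝ {deriv γ t, N t})ᗮ) (deriv H t) :
        EuclideanSpace ℝ (Fin m)) = projH γ N t (deriv H t) from rfl, hHparallel t,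
      sub_zero, Submodule.orthogonal_orthogonal] at h1
    exact h1
  obtain ⟨a, b, hab⟩ := Submodule.mem_span_pair.mp hH'mem
  have hNH' : ⟪N t, deriv H t⟫ = 0 := by
    have h0 : HasDerivAt (fun s => ⟪N s, H s⟫) 0 t := by
      have : (fun s => ⟪N s, H s⟫) = fun _ => (0 : ℝ) := funext fun s => hNH s
      rw [this]; exact hasDerivAt_const t 0
    have h1 : HasDerivAt (fun s => ⟪N s, H s⟫)
        (⟪N t, deriv H t⟫ + ⟪deriv N t, H t⟫) t := (hNd t).inner ℝ (hHd t)
    have h2 : ⟪N t, deriv H t⟫ + ⟪deriv N t, H t⟫ = 0 := h1.unique h0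
    have h3 : ⟪deriv N t, H t⟫ = 0 := by
      rw [hc, real_inner_smul_left, hTH]; ring
    linarith
  have hb : b = 0 := by
    have h4 := hNH'
    rw [← hab, inner_add_right, real_inner_smul_right, real_inner_smul_right,
      hNorth t, hNN] at h4
    linarith
  have hH' : deriv H t = a • deriv γ t := by rw [← hab, hb]; module
  -- derivative of N(θ)
  have hsin : HasDerivAt (fun s => Real.sin (θ s)) (Real.cos (θ t) * deriv θ t) t :=
    (Real.hasDerivAt_sin (θ t)).comp t hθd
  have hcos : HasDerivAt (fun s => Real.cos (θ s)) (-Real.sin (θ t) * deriv θ t) t :=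
    (Real.hasDerivAt_cos (θ t)).comp t hθd
  have hNθ' : HasDerivAt (fun s => -Real.sin (θ s) • H s + Real.cos (θ s) • N s)
      ((-Real.sin (θ t)) • deriv H t + (-(Real.cos (θ t) * deriv θ t)) • H t +
        (Real.cos (θ t) • deriv N t + (-Real.sin (θ t) * deriv θ t) • N t)) t :=
    (hsin.neg.smul (hHd t)).add (hcos.smul (hNd t))
  have hderiv : deriv (fun s => -Real.sin (θ s) • H s + Real.cos (θ s) • N s) t =
      (-deriv θ t) • (Real.cos (θ t) • H t + Real.sin (θ t) • N t) +
        (-Real.sin (θ t) * a + Real.cos (θ t) * c) • deriv γ t := by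
    rw [hNθ'.deriv, hH', hc]; module
  -- the projection
  set K := Submodule.span ℝ {deriv γ t,
    (fun s => -Real.sin (θ s) • H s + Real.cos (θ s) • N s) t} with hK
  have hTmem : (Submodule.orthogonalProjectionOnto Kᗮ) (deriv γ t) = 0 :=
    Submodule.orthogonalProjectionOnto_apply_of_mem_orthogonal
      (Submodule.le_orthogonal_orthogonal K (Submodule.subset_span (by simp)))
  have hH₁mem : Real.cos (θ t) • H t + Real.sin (θ t) • N t ∈ Kᗮ := by
    rw [Submodule.mem_orthogonal]
    intro u hu
    obtain ⟨p, q, hpq⟩ := Submodule.mem_span_pair.mp hu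
    rw [← hpq]
    simp only [inner_add_left, inner_add_right, real_inner_smul_left, real_inner_smul_right,
      inner_neg_left, inner_neg_right]
    have h1 : ⟪H t, N t⟫ = 0 := by rw [real_inner_comm]; exact hNH t
    simp only [hTH, hTN, hHH, hNN, hNH t, h1]
    ring
  have hprojH₁ : ((Submodule.orthogonalProjectionOnto Kᗮ)
        (Real.cos (θ t) • H t + Real.sin (θ t) • N t) : EuclideanSpace ℝ (Fin m)) =
      Real.cos (θ t) • H t + Real.sin (θ t) • N t :=
    Submodule.starProjection_eq_self_iff.mpr hH₁mem
  show -(Submodule.orthogonalProjectionOnto Kᗮ (deriv (fun s => -Real.sin (θ s) • H s + Real.cos (θ s) • N s) t) :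
      EuclideanSpace ℝ (Fin m)) = _
  rw [hderiv, map_add, map_smul, map_smul, hTmem]
  simp only [smul_zero, add_zero, Submodule.coe_smul, hprojH₁]
  module
end

section
/- Let m ≥ 3, let γ : ℝ → EuclideanSpace ℝ (Fin m) be a smooth unit-speed curve, closed with period ℓ > 0, and let N be a unit normal field along γ such that N'(t) is a scalar multiple of γ'(t) for every t (γ is a line of curvature with respect to N). Let H be a smooth map with ‖H(t)‖ = 1 and H(t) ∈ ℋ(N)_t for all t, parallel in ℋ(N), and let θ : ℝ → ℝ be smooth with θ(ℓ) − θ(0) = 2πn for some integer n (a closed parallel rotation). Set N(θ)(t) = -sin(θ(t)) H(t) + cos(θ(t)) N(t) and H₁(θ)(t) = cos(θ(t)) H(t) + sin(θ(t)) N(t). Then the total geodesic torsion of γ with respect to N(θ) satisfies ∫₀^ℓ ⟨-(N(θ))'(t), H₁(θ)(t)⟩ dt = 2πn; in particular it is an integer multiple of 2π. -/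
open scoped RealInnerProductSpace

/-- If `γ` is a closed line of curvature with respect to `N`, then the total geodesic
torsion of `γ` with respect to any closed parallel rotation `N(θ)` of `N` equals `2πn`. -/
theorem total_geodesicTorsion_of_closed_parallel_rotation
    (m : ℕ) (hm : 3 ≤ m)
    (γ : ℝ → EuclideanSpace ℝ (Fin m)) (ℓ : ℝ) (hℓ : 0 < ℓ)
    (hsmooth : ContDiff ℝ (⊤ : ℕ∞) γ)
    (hunit : ∀ t, ‖deriv γ t‖ = 1)
    (hclosed : ∀ t, γ (t + ℓ) = γ t)
    (N : ℝ → EuclideanSpace ℝ (Fin m))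
    (hNsmooth : ContDiff ℝ (⊤ : ℕ∞) N)
    (hNunit : ∀ t, ‖N t‖ = 1)
    (hNorth : ∀ t, ⟪N t, deriv γ t⟫ = 0)
    (hRodrigues : ∀ t, ∃ c : ℝ, deriv N t = c • deriv γ t)
    (H : ℝ → EuclideanSpace ℝ (Fin m))
    (hHsmooth : ContDiff ℝ (⊤ : ℕ∞) H)
    (hHunit : ∀ t, ‖H t‖ = 1)
    (hHmem : ∀ t, H t ∈ (Submodule.span ℝ {deriv γ t, N t})ᗮ)
    (hHparallel : ∀ t, projH γ N t (deriv H t) = 0)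
    (θ : ℝ → ℝ) (hθ : ContDiff ℝ (⊤ : ℕ∞) θ)
    (n : ℤ) (hθclosed : θ ℓ - θ 0 = 2 * Real.pi * n) :
    ∫ t in (0:ℝ)..ℓ,
        ⟪-deriv (fun s => -Real.sin (θ s) • H s + Real.cos (θ s) • N s) t,
          Real.cos (θ t) • H t + Real.sin (θ t) • N t⟫ = 2 * Real.pi * n := by
  have hθd : Differentiable ℝ θ := hθ.differentiable (by simp)
  have hHd : Differentiable ℝ H := hHsmooth.differentiable (by simp)
  have hNd : Differentiable ℝ N := hNsmooth.differentiable (by simp)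
  have hHN : ∀ t, ⟪H t, N t⟫ = 0 := fun t => by
    have := (hHmem t) (N t)
      (Submodule.subset_span (by simp : N t ∈ ({deriv γ t, N t} : Set _)))
    rwa [real_inner_comm] at this
  have hHγ : ∀ t, ⟪H t, deriv γ t⟫ = 0 := fun t => by
    have := (hHmem t) (deriv γ t)
      (Submodule.subset_span (by simp : deriv γ t ∈ ({deriv γ t, N t} : Set _)))
    rwa [real_inner_comm] at this
  have hHH : ∀ t, ⟪H t, H t⟫ = 1 := fun t => by
    rw [real_inner_self_eq_norm_sq, hHunit]; norm_num
  have hNNi : ∀ t, ⟪N t, N t⟫ = 1 := fun t => by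
    rw [real_inner_self_eq_norm_sq, hNunit]; norm_num
  -- derivative of H is orthogonal to H
  have hH'H : ∀ t, ⟪deriv H t, H t⟫ = 0 := fun t => by
    have h2 : HasDerivAt (fun s => ⟪H s, H s⟫)
        (⟪H t, deriv H t⟫ + ⟪deriv H t, H t⟫) t :=
      HasDerivAt.inner ℝ (hHd t).hasDerivAt (hHd t).hasDerivAt
    have h1 : (fun s => ⟪H s, H s⟫) = fun _ => (1 : ℝ) := funext fun s => hHH s
    rw [h1] at h2
    have := h2.deriv
    rw [deriv_const] at this
    rw [real_inner_comm (H t) (deriv H t)] at this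
    rw [real_inner_comm]; linarith
  -- derivative of H is orthogonal to N
  have hH'N : ∀ t, ⟪deriv H t, N t⟫ = 0 := fun t => by
    obtain ⟨c, hc⟩ := hRodrigues t
    have h2 : HasDerivAt (fun s => ⟪H s, N s⟫)
        (⟪H t, deriv N t⟫ + ⟪deriv H t, N t⟫) t :=
      HasDerivAt.inner ℝ (hHd t).hasDerivAt (hNd t).hasDerivAt
    have h1 : (fun s => ⟪H s, N s⟫) = fun _ => (0 : ℝ) := funext fun s => hHN s
    rw [h1] at h2
    have h3 := h2.deriv
    rw [deriv_const] at h3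
    have h4 : ⟪H t, deriv N t⟫ = 0 := by
      rw [hc, real_inner_smul_right, hHγ t]; ring
    linarith
  -- deriv N orthogonal to H and N
  have hN'H : ∀ t, ⟪deriv N t, H t⟫ = 0 := fun t => by
    obtain ⟨c, hc⟩ := hRodrigues t
    rw [hc, real_inner_smul_left, real_inner_comm, hHγ t]; ring
  have hN'N : ∀ t, ⟪deriv N t, N t⟫ = 0 := fun t => by
    obtain ⟨c, hc⟩ := hRodrigues t
    rw [hc, real_inner_smul_left, real_inner_comm, hNorth t]; ring
  -- the integrand equals deriv θ
  have key : ∀ t, ⟪-deriv (fun s => -Real.sin (θ s) • H s + Real.cos (θ s) • N s) t,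
      Real.cos (θ t) • H t + Real.sin (θ t) • N t⟫ = deriv θ t := by
    intro t
    have hsin : HasDerivAt (fun s => -Real.sin (θ s))
        (-(Real.cos (θ t) * deriv θ t)) t := ((hθd t).hasDerivAt.sin).neg
    have hcos : HasDerivAt (fun s => Real.cos (θ s))
        (-Real.sin (θ t) * deriv θ t) t := (hθd t).hasDerivAt.cos
    have hD : HasDerivAt (fun s => -Real.sin (θ s) • H s + Real.cos (θ s) • N s)
        ((-Real.sin (θ t) • deriv H t + (-(Real.cos (θ t) * deriv θ t)) • H t)
          + (Real.cos (θ t) • deriv N t + (-Real.sin (θ t) * deriv θ t) • N t)) t :=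
      (hsin.smul (hHd t).hasDerivAt).add (hcos.smul (hNd t).hasDerivAt)
    rw [hD.deriv]
    simp only [inner_neg_left, inner_add_left, inner_add_right, inner_smul_left,
      inner_smul_right, RCLike.conj_to_real, conj_trivial]
    rw [hHH t, hNNi t, hHN t, hH'H t, hH'N t, hN'H t, hN'N t,
      real_inner_comm (H t) (N t), hHN t]
    have hpyth := Real.sin_sq_add_cos_sq (θ t)
    linear_combination deriv θ t * hpyth
  rw [intervalIntegral.integral_congr (fun t _ => key t)]
  rw [intervalIntegral.integral_deriv_eq_sub (fun t _ => hθd t)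
    ((hθ.continuous_deriv (mod_cast le_top)).intervalIntegrable 0 ℓ)]
  exact hθclosed
end

section
/- Let m ≥ 3 and let γ : ℝ → EuclideanSpace ℝ (Fin m) be a smooth unit-speed curve, closed with period ℓ > 0, which is three-dimensional with curvature κ(t) = ‖γ''(t)‖ > 0, principal normal P = γ''/κ, torsion τ, and unit field H₁, where P and H₁ satisfy P(t + ℓ) = P(t), H₁(t + ℓ) = H₁(t), and τ(t + ℓ) = τ(t) for all t. Suppose N is a unit normal field along γ with N(t + ℓ) = N(t) for all t, such that γ is a well-positioned line of curvature with respect to N, i.e., N'(t) is a scalar multiple of γ'(t) and N(t) ∈ span{P(t), H₁(t)} for every t. Then the total torsion ∫₀^ℓ τ(t) dt is an integer multiple of 2π. -/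
open scoped RealInnerProductSpace

/-- The total torsion of a closed three-dimensional curve that is a well-positioned
line of curvature of an oriented hypersurface is an integer multiple of `2π`. -/
theorem total_torsion_of_wellPositioned_line_of_curvature
    (m : ℕ) (hm : 3 ≤ m)
    (γ : ℝ → EuclideanSpace ℝ (Fin m)) (ℓ : ℝ) (hℓ : 0 < ℓ)
    (hsmooth : ContDiff ℝ (⊤ : ℕ∞) γ)
    (hunit : ∀ t, ‖deriv γ t‖ = 1)
    (hclosed : ∀ t, γ (t + ℓ) = γ t)
    (hcurv : ∀ t, ‖deriv (deriv γ) t‖ > 0)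
    (P : ℝ → EuclideanSpace ℝ (Fin m))
    (hP : ∀ t, P t = ‖deriv (deriv γ) t‖⁻¹ • deriv (deriv γ) t)
    (τ : ℝ → ℝ) (hτsmooth : ContDiff ℝ (⊤ : ℕ∞) τ)
    (H₁ : ℝ → EuclideanSpace ℝ (Fin m))
    (hH₁smooth : ContDiff ℝ (⊤ : ℕ∞) H₁)
    (hH₁unit : ∀ t, ‖H₁ t‖ = 1)
    (hH₁γ : ∀ t, ⟪H₁ t, deriv γ t⟫ = 0)
    (hH₁P : ∀ t, ⟪H₁ t, P t⟫ = 0)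
    (hFrenetP : ∀ t, deriv P t =
      -‖deriv (deriv γ) t‖ • deriv γ t - τ t • H₁ t)
    (hFrenetH₁ : ∀ t, deriv H₁ t = τ t • P t)
    (hPclosed : ∀ t, P (t + ℓ) = P t)
    (hH₁closed : ∀ t, H₁ (t + ℓ) = H₁ t)
    (hτclosed : ∀ t, τ (t + ℓ) = τ t)
    (N : ℝ → EuclideanSpace ℝ (Fin m))
    (hNsmooth : ContDiff ℝ (⊤ : ℕ∞) N)
    (hNclosed : ∀ t, N (t + ℓ) = N t)
    (hNunit : ∀ t, ‖N t‖ = 1)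
    (hNorth : ∀ t, ⟪N t, deriv γ t⟫ = 0)
    (hRodrigues : ∀ t, ∃ c : ℝ, deriv N t = c • deriv γ t)
    (hwellPositioned : ∀ t, N t ∈ Submodule.span ℝ {P t, H₁ t}) :
    ∃ n : ℤ, ∫ t in (0:ℝ)..ℓ, τ t = 2 * Real.pi * n := by
  -- smoothness of derivatives
  have hγ1 : ContDiff ℝ (⊤ : ℕ∞) (deriv γ) := (contDiff_infty_iff_deriv.mp hsmooth).2
  have hγ2 : ContDiff ℝ (⊤ : ℕ∞) (deriv (deriv γ)) := (contDiff_infty_iff_deriv.mp hγ1).2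
  have hγ'diff : Differentiable ℝ (deriv γ) := hγ1.differentiable (by simp)
  have hNdiff : Differentiable ℝ N := hNsmooth.differentiable (by simp)
  have hH₁diff : Differentiable ℝ H₁ := hH₁smooth.differentiable (by simp)
  have hPdiff : Differentiable ℝ P := by
    have hPfun : P = fun s => ‖deriv (deriv γ) s‖⁻¹ • deriv (deriv γ) s := funext hP
    rw [hPfun]
    intro t
    have h0 : deriv (deriv γ) t ≠ 0 := by
      intro h
      have := hcurv t
      rw [h, norm_zero] at this
      exact lt_irrefl 0 this
    have hκ : ContDiffAt ℝ (⊤ : ℕ∞) (fun s => ‖deriv (deriv γ) s‖) t :=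
      hγ2.contDiffAt.norm ℝ h0
    exact ((hκ.inv (ne_of_gt (hcurv t))).smul hγ2.contDiffAt).differentiableAt (by simp)
  have hPnorm : ∀ t, ‖P t‖ = 1 := by
    intro t
    rw [hP t, norm_smul, norm_inv, norm_norm]
    exact inv_mul_cancel₀ (ne_of_gt (hcurv t))
  -- P ⟂ γ'
  have hPγ : ∀ t, ⟪P t, deriv γ t⟫ = 0 := by
    intro t
    have h1 : HasDerivAt (fun s => ⟪deriv γ s, deriv γ s⟫)
        (⟪deriv γ t, deriv (deriv γ) t⟫ + ⟪deriv (deriv γ) t, deriv γ t⟫) t :=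
      ((hγ'diff t).hasDerivAt).inner ℝ ((hγ'diff t).hasDerivAt)
    have h2 : (fun s => ⟪deriv γ s, deriv γ s⟫) = fun _ => (1 : ℝ) := by
      funext s
      rw [real_inner_self_eq_norm_sq, hunit s]; norm_num
    rw [h2] at h1
    have h3 := h1.unique (hasDerivAt_const t 1)
    rw [real_inner_comm (deriv γ t)] at h3
    have h4 : ⟪deriv (deriv γ) t, deriv γ t⟫ = 0 := by
      rw [real_inner_comm]; linarith
    rw [hP t, real_inner_smul_left, h4, mul_zero]
  set a : ℝ → ℝ := fun t => ⟪P t, N t⟫ with ha_def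
  set b : ℝ → ℝ := fun t => ⟪H₁ t, N t⟫ with hb_def
  have ha : ∀ t, HasDerivAt a (-(τ t * b t)) t := by
    intro t
    have h := ((hPdiff t).hasDerivAt).inner ℝ ((hNdiff t).hasDerivAt)
    obtain ⟨c, hc⟩ := hRodrigues t
    have e1 : ⟪P t, deriv N t⟫ = 0 := by
      rw [hc, real_inner_smul_right, hPγ t, mul_zero]
    have e2 : ⟪deriv P t, N t⟫ = -(τ t * b t) := by
      have hg : ⟪deriv γ t, N t⟫ = 0 := by rw [real_inner_comm]; exact hNorth t
      rw [hFrenetP t, inner_sub_left, real_inner_smul_left, real_inner_smul_left, hg,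
        mul_zero, zero_sub]
    simpa [e1, e2] using h
  have hb : ∀ t, HasDerivAt b (τ t * a t) t := by
    intro t
    have h := ((hH₁diff t).hasDerivAt).inner ℝ ((hNdiff t).hasDerivAt)
    obtain ⟨c, hc⟩ := hRodrigues t
    have e1 : ⟪H₁ t, deriv N t⟫ = 0 := by
      rw [hc, real_inner_smul_right, hH₁γ t, mul_zero]
    have e2 : ⟪deriv H₁ t, N t⟫ = τ t * a t := by
      rw [hFrenetH₁ t, real_inner_smul_left]
    simpa [e1, e2] using h
  -- the complex-valued function
  set z : ℝ → ℂ := fun t => (a t : ℂ) + (b t : ℂ) * Complex.I with hz_def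
  have hz : ∀ t, HasDerivAt z (Complex.I * (τ t : ℂ) * z t) t := by
    intro t
    have h := ((ha t).ofReal_comp).fun_add (((hb t).ofReal_comp).mul_const Complex.I)
    convert h using 1
    · rfl
    simp only [hz_def]
    push_cast
    linear_combination ((τ t : ℂ) * (b t : ℂ)) * Complex.I_mul_I
  set θ : ℝ → ℝ := fun t => ∫ s in (0:ℝ)..t, τ s with hθ_def
  have hτc : Continuous τ := hτsmooth.continuous
  have hθ : ∀ t, HasDerivAt θ (τ t) t := fun t =>
    intervalIntegral.integral_hasDerivAt_right (hτc.intervalIntegrable _ _)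
      hτc.aestronglyMeasurable.stronglyMeasurableAtFilter hτc.continuousAt
  set w : ℝ → ℂ := fun t => z t * Complex.exp (-((θ t : ℂ) * Complex.I)) with hw_def
  have hw : ∀ t, HasDerivAt w 0 t := by
    intro t
    have hexp : HasDerivAt (fun s => Complex.exp (-((θ s : ℂ) * Complex.I)))
        (Complex.exp (-((θ t : ℂ) * Complex.I)) * (-((τ t : ℂ) * Complex.I))) t := by
      have := (((hθ t).ofReal_comp).mul_const Complex.I).neg.cexp
      simpa using this
    have h := (hz t).fun_mul hexp
    convert h using 1
    · rfl
    ring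
  have hconst : w ℓ = w 0 :=
    is_const_of_deriv_eq_zero (fun t => (hw t).differentiableAt)
      (fun t => (hw t).deriv) ℓ 0
  -- periodicity
  have hzℓ : z ℓ = z 0 := by
    have hPa : P ℓ = P 0 := by have := hPclosed 0; rwa [zero_add] at this
    have hNa : N ℓ = N 0 := by have := hNclosed 0; rwa [zero_add] at this
    have hHa : H₁ ℓ = H₁ 0 := by have := hH₁closed 0; rwa [zero_add] at this
    simp [hz_def, ha_def, hb_def, hPa, hNa, hHa]
  -- z 0 ≠ 0
  have hPH : ⟪P 0, H₁ 0⟫ = 0 := (real_inner_comm _ _).trans (hH₁P 0)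
  have hPP : ⟪P 0, P 0⟫ = (1:ℝ) := by
    rw [real_inner_self_eq_norm_sq, hPnorm 0]; norm_num
  have hHH : ⟪H₁ 0, H₁ 0⟫ = (1:ℝ) := by
    rw [real_inner_self_eq_norm_sq, hH₁unit 0]; norm_num
  have hab : a 0 ^ 2 + b 0 ^ 2 = 1 := by
    obtain ⟨c, d, hcd⟩ := Submodule.mem_span_pair.mp (hwellPositioned 0)
    have ha0 : a 0 = c := by
      show ⟪P 0, N 0⟫ = c
      rw [← hcd, inner_add_right, real_inner_smul_right, real_inner_smul_right,
        hPP, hPH, mul_one, mul_zero, add_zero]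
    have hb0 : b 0 = d := by
      show ⟪H₁ 0, N 0⟫ = d
      rw [← hcd, inner_add_right, real_inner_smul_right, real_inner_smul_right,
        hHH, hH₁P 0, mul_one, mul_zero, zero_add]
    have hNN : ⟪N 0, N 0⟫ = (1:ℝ) := by
      rw [real_inner_self_eq_norm_sq, hNunit 0]; norm_num
    rw [← hcd] at hNN
    simp only [real_inner_add_add_self, real_inner_smul_left, real_inner_smul_right,
      hPP, hHH, hPH, mul_one, mul_zero] at hNN
    rw [ha0, hb0]
    nlinarith [hNN]
  have hz0 : z 0 ≠ 0 := by
    intro h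
    have h1 : Complex.normSq (z 0) = 0 := by rw [h]; simp
    rw [hz_def] at h1
    simp only [Complex.normSq_add_mul_I] at h1
    rw [hab] at h1
    norm_num at h1
  have hθ0 : θ 0 = 0 := intervalIntegral.integral_same
  have hexp1 : Complex.exp (-((θ ℓ : ℂ) * Complex.I)) = 1 := by
    have h := hconst
    simp only [hw_def, hzℓ, hθ0] at h
    push_cast at h
    simp only [zero_mul, neg_zero, Complex.exp_zero, mul_one] at h
    exact mul_left_cancel₀ hz0 (by rw [mul_one]; exact h)
  obtain ⟨n, hn⟩ := Complex.exp_eq_one_iff.mp hexp1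
  refine ⟨-n, ?_⟩
  have h2 : ((-(θ ℓ) : ℝ) : ℂ) = ((n : ℝ) * (2 * Real.pi) : ℝ) := by
    apply mul_right_cancel₀ Complex.I_ne_zero
    push_cast
    linear_combination hn
  have h3 : -(θ ℓ) = (n : ℝ) * (2 * Real.pi) := by exact_mod_cast h2
  show θ ℓ = 2 * Real.pi * ((-n : ℤ) : ℝ)
  push_cast
  linarith
end

section
/- Let m ≥ 3 and let γ : ℝ → EuclideanSpace ℝ (Fin m) be a smooth unit-speed curve, closed with period ℓ > 0, which is three-dimensional with curvature κ(t) = ‖γ''(t)‖ > 0, principal normal P = γ''/κ, torsion τ, and unit field H₁, where P(t + ℓ) = P(t), H₁(t + ℓ) = H₁(t), and τ(t + ℓ) = τ(t) for all t. Suppose N is a unit normal field along γ with N(t + ℓ) = N(t), such that γ is a well-positioned line of curvature with respect to N (N'(t) is a scalar multiple of γ'(t) and N(t) ∈ span{P(t), H₁(t)} for every t), and suppose moreover that the normal curvature is positive: ⟨γ''(t), N(t)⟩ > 0 for all t (convexity). Then the total torsion vanishes: ∫₀^ℓ τ(t) dt = 0. -/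
open scoped RealInnerProductSpace

/-- The total torsion of a closed three-dimensional curve that is a well-positioned
line of curvature of a *convex* oriented hypersurface vanishes. -/
theorem total_torsion_of_wellPositioned_line_of_curvature_convex
    (m : ℕ) (hm : 3 ≤ m)
    (γ : ℝ → EuclideanSpace ℝ (Fin m)) (ℓ : ℝ) (hℓ : 0 < ℓ)
    (hsmooth : ContDiff ℝ (⊤ : ℕ∞) γ)
    (hunit : ∀ t, ‖deriv γ t‖ = 1)
    (hclosed : ∀ t, γ (t + ℓ) = γ t)
    (hcurv : ∀ t, ‖deriv (deriv γ) t‖ > 0)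
    (P : ℝ → EuclideanSpace ℝ (Fin m))
    (hP : ∀ t, P t = ‖deriv (deriv γ) t‖⁻¹ • deriv (deriv γ) t)
    (τ : ℝ → ℝ) (hτsmooth : ContDiff ℝ (⊤ : ℕ∞) τ)
    (H₁ : ℝ → EuclideanSpace ℝ (Fin m))
    (hH₁smooth : ContDiff ℝ (⊤ : ℕ∞) H₁)
    (hH₁unit : ∀ t, ‖H₁ t‖ = 1)
    (hH₁γ : ∀ t, ⟪H₁ t, deriv γ t⟫ = 0)
    (hH₁P : ∀ t, ⟪H₁ t, P t⟫ = 0)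
    (hFrenetP : ∀ t, deriv P t =
      -‖deriv (deriv γ) t‖ • deriv γ t - τ t • H₁ t)
    (hFrenetH₁ : ∀ t, deriv H₁ t = τ t • P t)
    (hPclosed : ∀ t, P (t + ℓ) = P t)
    (hH₁closed : ∀ t, H₁ (t + ℓ) = H₁ t)
    (hτclosed : ∀ t, τ (t + ℓ) = τ t)
    (N : ℝ → EuclideanSpace ℝ (Fin m))
    (hNsmooth : ContDiff ℝ (⊤ : ℕ∞) N)
    (hNclosed : ∀ t, N (t + ℓ) = N t)
    (hNunit : ∀ t, ‖N t‖ = 1)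
    (hNorth : ∀ t, ⟪N t, deriv γ t⟫ = 0)
    (hRodrigues : ∀ t, ∃ c : ℝ, deriv N t = c • deriv γ t)
    (hwellPositioned : ∀ t, N t ∈ Submodule.span ℝ {P t, H₁ t})
    (hconvex : ∀ t, ⟪deriv (deriv γ) t, N t⟫ > 0) :
    ∫ t in (0:ℝ)..ℓ, τ t = 0 := by
  classical
  -- basic smoothness facts
  have hγ1 : ContDiff ℝ (⊤ : ℕ∞) (deriv γ) := (contDiff_infty_iff_deriv.mp hsmooth).2
  have hγ2 : ContDiff ℝ (⊤ : ℕ∞) (deriv (deriv γ)) := (contDiff_infty_iff_deriv.mp hγ1).2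
  have hγ1d : Differentiable ℝ (deriv γ) := hγ1.differentiable (by simp)
  have hNdiff : Differentiable ℝ N := hNsmooth.differentiable (by simp)
  have hH₁diff : Differentiable ℝ H₁ := hH₁smooth.differentiable (by simp)
  -- P is differentiable
  have hPdiff : ∀ t, DifferentiableAt ℝ P t := by
    intro t
    have hne : deriv (deriv γ) t ≠ 0 := by
      intro h
      have := hcurv t
      rw [h, norm_zero] at this
      exact lt_irrefl 0 this
    have h1 : ContDiffAt ℝ (⊤ : ℕ∞) (fun s => ‖deriv (deriv γ) s‖⁻¹ • deriv (deriv γ) s) t :=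
      ((hγ2.contDiffAt.norm ℝ hne).inv (ne_of_gt (hcurv t))).smul hγ2.contDiffAt
    have : P = fun s => ‖deriv (deriv γ) s‖⁻¹ • deriv (deriv γ) s := funext hP
    rw [this]
    exact h1.differentiableAt (by simp)
  -- ⟪γ' t, γ'' t⟫ = 0
  have horth : ∀ t, ⟪deriv γ t, deriv (deriv γ) t⟫ = 0 := by
    intro t
    have h1 : HasDerivAt (fun s => ⟪deriv γ s, deriv γ s⟫)
        (⟪deriv γ t, deriv (deriv γ) t⟫ + ⟪deriv (deriv γ) t, deriv γ t⟫) t :=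
      (hγ1d t).hasDerivAt.inner ℝ (hγ1d t).hasDerivAt
    have h2 : (fun s => ⟪deriv γ s, deriv γ s⟫) = fun _ : ℝ => (1 : ℝ) := by
      funext s
      rw [real_inner_self_eq_norm_sq, hunit s]; norm_num
    rw [h2] at h1
    have h3 : ⟪deriv γ t, deriv (deriv γ) t⟫ + ⟪deriv (deriv γ) t, deriv γ t⟫ = 0 := by
      have := (hasDerivAt_const t (1 : ℝ)).unique h1
      linarith [this]
    rw [real_inner_comm (deriv γ t)] at h3
    linarith
  have hγ'P : ∀ t, ⟪deriv γ t, P t⟫ = 0 := by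
    intro t
    rw [hP t, inner_smul_right, horth t, mul_zero]
  -- positivity of a = ⟪N, P⟫
  set a : ℝ → ℝ := fun t => ⟪N t, P t⟫ with ha_def
  set b : ℝ → ℝ := fun t => ⟪N t, H₁ t⟫ with hb_def
  have hapos : ∀ t, 0 < a t := by
    intro t
    have : a t = ‖deriv (deriv γ) t‖⁻¹ * ⟪deriv (deriv γ) t, N t⟫ := by
      simp only [ha_def, hP t, inner_smul_right, real_inner_comm]
    rw [this]
    exact mul_pos (inv_pos.mpr (hcurv t)) (hconvex t)
  -- derivative of a
  have ha' : ∀ t, HasDerivAt a (-(τ t * b t)) t := by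
    intro t
    have h1 : HasDerivAt a (⟪N t, deriv P t⟫ + ⟪deriv N t, P t⟫) t :=
      (hNdiff t).hasDerivAt.inner ℝ (hPdiff t).hasDerivAt
    obtain ⟨c, hc⟩ := hRodrigues t
    have e1 : ⟪deriv N t, P t⟫ = 0 := by
      rw [hc, inner_smul_left]; simp [hγ'P t]
    have e2 : ⟪N t, deriv P t⟫ = -(τ t * b t) := by
      rw [hFrenetP t, inner_sub_right, inner_smul_right, inner_smul_right, hNorth t]
      simp [hb_def]
    rwa [e1, e2, add_zero] at h1
  have hb' : ∀ t, HasDerivAt b (τ t * a t) t := by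
    intro t
    have h1 : HasDerivAt b (⟪N t, deriv H₁ t⟫ + ⟪deriv N t, H₁ t⟫) t :=
      (hNdiff t).hasDerivAt.inner ℝ (hH₁diff t).hasDerivAt
    obtain ⟨c, hc⟩ := hRodrigues t
    have e1 : ⟪deriv N t, H₁ t⟫ = 0 := by
      rw [hc, inner_smul_left, real_inner_comm, hH₁γ t]; simp
    have e2 : ⟪N t, deriv H₁ t⟫ = τ t * a t := by
      rw [hFrenetH₁ t, inner_smul_right]
    rwa [e1, e2, add_zero] at h1
  -- the angle function
  set θ : ℝ → ℝ := fun t => Real.arctan (b t / a t) with hθ_def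
  have hθ' : ∀ t, HasDerivAt θ (τ t) t := by
    intro t
    have hane : a t ≠ 0 := ne_of_gt (hapos t)
    have hq : HasDerivAt (fun s => b s / a s)
        ((τ t * a t * a t - b t * -(τ t * b t)) / (a t) ^ 2) t :=
      (hb' t).div (ha' t) hane
    have harctan := (Real.hasDerivAt_arctan (b t / a t)).comp t hq
    have : 1 / (1 + (b t / a t) ^ 2) *
        ((τ t * a t * a t - b t * -(τ t * b t)) / (a t) ^ 2) = τ t := by
      have h2 : a t ^ 2 + b t ^ 2 > 0 := by positivity
      field_simp
      ring
    rwa [this] at harctan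
  -- integrate
  have hτcont : Continuous τ := hτsmooth.continuous
  have hint : ∫ t in (0:ℝ)..ℓ, τ t = θ ℓ - θ 0 :=
    intervalIntegral.integral_eq_sub_of_hasDerivAt (fun t _ => hθ' t)
      (hτcont.intervalIntegrable 0 ℓ)
  have haℓ : a ℓ = a 0 := by
    simp only [ha_def]
    have h1 := hNclosed 0
    have h2 := hPclosed 0
    rw [zero_add] at h1 h2
    rw [h1, h2]
  have hbℓ : b ℓ = b 0 := by
    simp only [hb_def]
    have h1 := hNclosed 0
    have h2 := hH₁closed 0
    rw [zero_add] at h1 h2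
    rw [h1, h2]
  rw [hint, hθ_def]
  simp [haℓ, hbℓ]
end

section
/- Let m ≥ 3 and let γ : ℝ → EuclideanSpace ℝ (Fin m) be a smooth unit-speed curve, closed with period ℓ > 0, which is three-dimensional with curvature κ(t) = ‖γ''(t)‖ > 0, principal normal P = γ''/κ, torsion τ, and unit field H₁, where P(t + ℓ) = P(t), H₁(t + ℓ) = H₁(t), and τ(t + ℓ) = τ(t) for all t. If ∫₀^ℓ τ(t) dt = 2πn for some integer n, then there exists a smooth map N : ℝ → EuclideanSpace ℝ (Fin m) with N(t + ℓ) = N(t), ‖N(t)‖ = 1, ⟨N(t), γ'(t)⟩ = 0 for all t, such that N'(t) is a scalar multiple of γ'(t) and N(t) ∈ span{P(t), H₁(t)} for every t; that is, γ appears as a well-positioned line of curvature of an oriented hypersurface. -/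
open scoped RealInnerProductSpace

/-- A closed three-dimensional curve whose total torsion is an integer multiple of `2π`
appears as a well-positioned line of curvature of an oriented hypersurface. -/
theorem exists_wellPositioned_line_of_curvature_of_closed_curve
    (m : ℕ) (hm : 3 ≤ m)
    (γ : ℝ → EuclideanSpace ℝ (Fin m)) (ℓ : ℝ) (hℓ : 0 < ℓ)
    (hsmooth : ContDiff ℝ (⊤ : ℕ∞) γ)
    (hunit : ∀ t, ‖deriv γ t‖ = 1)
    (hclosed : ∀ t, γ (t + ℓ) = γ t)
    (hcurv : ∀ t, ‖deriv (deriv γ) t‖ > 0)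
    (P : ℝ → EuclideanSpace ℝ (Fin m))
    (hP : ∀ t, P t = ‖deriv (deriv γ) t‖⁻¹ • deriv (deriv γ) t)
    (τ : ℝ → ℝ) (hτsmooth : ContDiff ℝ (⊤ : ℕ∞) τ)
    (H₁ : ℝ → EuclideanSpace ℝ (Fin m))
    (hH₁smooth : ContDiff ℝ (⊤ : ℕ∞) H₁)
    (hH₁unit : ∀ t, ‖H₁ t‖ = 1)
    (hH₁γ : ∀ t, ⟪H₁ t, deriv γ t⟫ = 0)
    (hH₁P : ∀ t, ⟪H₁ t, P t⟫ = 0)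
    (hFrenetP : ∀ t, deriv P t =
      -‖deriv (deriv γ) t‖ • deriv γ t - τ t • H₁ t)
    (hFrenetH₁ : ∀ t, deriv H₁ t = τ t • P t)
    (hPclosed : ∀ t, P (t + ℓ) = P t)
    (hH₁closed : ∀ t, H₁ (t + ℓ) = H₁ t)
    (hτclosed : ∀ t, τ (t + ℓ) = τ t)
    (n : ℤ) (htotal : ∫ t in (0:ℝ)..ℓ, τ t = 2 * Real.pi * n) :
    ∃ N : ℝ → EuclideanSpace ℝ (Fin m),
      ContDiff ℝ (⊤ : ℕ∞) N ∧
      (∀ t, N (t + ℓ) = N t) ∧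
      (∀ t, ‖N t‖ = 1) ∧
      (∀ t, ⟪N t, deriv γ t⟫ = 0) ∧
      (∀ t, ∃ c : ℝ, deriv N t = c • deriv γ t) ∧
      (∀ t, N t ∈ Submodule.span ℝ {P t, H₁ t}) := by
  -- notation
  set κ : ℝ → ℝ := fun t => ‖deriv (deriv γ) t‖ with hκ
  have hγ' : ContDiff ℝ (⊤ : ℕ∞) (deriv γ) := (contDiff_infty_iff_deriv.mp hsmooth).2
  have hγ'' : ContDiff ℝ (⊤ : ℕ∞) (deriv (deriv γ)) := (contDiff_infty_iff_deriv.mp hγ').2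
  have hγ''ne : ∀ t, deriv (deriv γ) t ≠ 0 := fun t => by
    intro h; have := hcurv t; rw [h] at this; simp at this
  have hκsmooth : ContDiff ℝ (⊤ : ℕ∞) κ := hγ''.norm ℝ hγ''ne
  have hκne : ∀ t, κ t ≠ 0 := fun t => ne_of_gt (hcurv t)
  have hPsmooth : ContDiff ℝ (⊤ : ℕ∞) P := by
    have : P = fun t => (κ t)⁻¹ • deriv (deriv γ) t := funext hP
    rw [this]
    exact (hκsmooth.inv hκne).smul hγ''
  have hPunit : ∀ t, ‖P t‖ = 1 := by
    intro t
    rw [hP t, norm_smul, norm_inv, norm_norm]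
    exact inv_mul_cancel₀ (hκne t)
  -- ⟪P, γ'⟫ = 0
  have hinner : ∀ t, ⟪deriv (deriv γ) t, deriv γ t⟫ = 0 := by
    intro t
    have hd : ∀ s, HasDerivAt (deriv γ) (deriv (deriv γ) s) s :=
      fun s => ((hγ'.differentiable (by simp)) s).hasDerivAt
    have h1 := (hd t).inner ℝ (hd t)
    have h2 : (fun s => ⟪deriv γ s, deriv γ s⟫) = fun _ => (1:ℝ) := by
      funext s
      rw [real_inner_self_eq_norm_sq, hunit s]; norm_num
    rw [h2] at h1
    have h3 := ((hasDerivAt_const t (1:ℝ)).unique h1).symm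
    have h4 : ⟪deriv γ t, deriv (deriv γ) t⟫ = ⟪deriv (deriv γ) t, deriv γ t⟫ :=
      real_inner_comm _ _
    linarith
  have hPγ' : ∀ t, ⟪P t, deriv γ t⟫ = 0 := by
    intro t
    rw [hP t, real_inner_smul_left, hinner t, mul_zero]
  -- the angle function
  set θ : ℝ → ℝ := fun t => ∫ s in (0:ℝ)..t, τ s with hθdef
  have hτcont : Continuous τ := hτsmooth.continuous
  have hθd : ∀ t, HasDerivAt θ (τ t) t := fun t =>
    (hτcont.integral_hasStrictDerivAt 0 t).hasDerivAt
  have hθsmooth : ContDiff ℝ (⊤ : ℕ∞) θ := by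
    rw [contDiff_infty_iff_deriv]
    refine ⟨fun t => (hθd t).differentiableAt, ?_⟩
    have : deriv θ = τ := funext fun t => (hθd t).deriv
    rw [this]; exact hτsmooth
  have hθper : ∀ t, θ (t + ℓ) = θ t + 2 * Real.pi * n := by
    intro t
    have hper : Function.Periodic τ ℓ := hτclosed
    have hInt : ∀ a b : ℝ, IntervalIntegrable τ MeasureTheory.volume a b :=
      fun a b => hτcont.intervalIntegrable a b
    have := hper.intervalIntegral_add_eq_add 0 t hInt
    simp only [hθdef]
    rw [this, hper.intervalIntegral_add_eq 0 0, zero_add, htotal]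
  -- the normal field
  refine ⟨fun t => Real.cos (θ t) • P t + Real.sin (θ t) • H₁ t, ?_, ?_, ?_, ?_, ?_, ?_⟩
  · exact ((Real.contDiff_cos.comp hθsmooth).smul hPsmooth).add
      ((Real.contDiff_sin.comp hθsmooth).smul hH₁smooth)
  · intro t
    simp only
    rw [hθper t, hPclosed t, hH₁closed t]
    have hc : Real.cos (θ t + 2 * Real.pi * n) = Real.cos (θ t) := by
      have := Real.cos_add_int_mul_two_pi (θ t) n
      rw [← this]; ring_nf
    have hs : Real.sin (θ t + 2 * Real.pi * n) = Real.sin (θ t) := by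
      have := Real.sin_add_int_mul_two_pi (θ t) n
      rw [← this]; ring_nf
    rw [hc, hs]
  · intro t
    have h1 : ⟪P t, P t⟫ = 1 := by
      rw [real_inner_self_eq_norm_sq, hPunit t]; norm_num
    have h2 : ⟪H₁ t, H₁ t⟫ = 1 := by
      rw [real_inner_self_eq_norm_sq, hH₁unit t]; norm_num
    have h3 : ⟪P t, H₁ t⟫ = 0 := by rw [real_inner_comm]; exact hH₁P t
    have : ⟪Real.cos (θ t) • P t + Real.sin (θ t) • H₁ t,
        Real.cos (θ t) • P t + Real.sin (θ t) • H₁ t⟫ = 1 := by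
      have h4 : ⟪H₁ t, P t⟫ = 0 := hH₁P t
      simp only [inner_add_left, inner_add_right, real_inner_smul_left,
        real_inner_smul_right, h1, h2, h3, h4]
      nlinarith [Real.sin_sq_add_cos_sq (θ t)]
    have hnn := @norm_eq_sqrt_real_inner (EuclideanSpace ℝ (Fin m)) _ _
      (Real.cos (θ t) • P t + Real.sin (θ t) • H₁ t)
    rw [hnn, this, Real.sqrt_one]
  · intro t
    simp only [inner_add_left, real_inner_smul_left, hPγ' t, hH₁γ t, mul_zero, add_zero]
  · intro t
    refine ⟨-(κ t * Real.cos (θ t)), ?_⟩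
    have hPd : HasDerivAt P (deriv P t) t := ((hPsmooth.differentiable (by simp)) t).hasDerivAt
    have hHd : HasDerivAt H₁ (deriv H₁ t) t := ((hH₁smooth.differentiable (by simp)) t).hasDerivAt
    have hcd : HasDerivAt (fun s => Real.cos (θ s)) (-Real.sin (θ t) * τ t) t := (hθd t).cos
    have hsd : HasDerivAt (fun s => Real.sin (θ s)) (Real.cos (θ t) * τ t) t := (hθd t).sin
    have hN : HasDerivAt (fun t => Real.cos (θ t) • P t + Real.sin (θ t) • H₁ t) _ t := (hcd.smul hPd).add (hsd.smul hHd)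
    rw [hN.deriv, hFrenetP t, hFrenetH₁ t]
    simp only [smul_sub, smul_smul, smul_add, neg_smul, sub_eq_add_neg, ← hκ]
    module
  · intro t
    refine Submodule.add_mem _ (Submodule.smul_mem _ _ ?_) (Submodule.smul_mem _ _ ?_)
    · exact Submodule.subset_span (Set.mem_insert _ _)
    · exact Submodule.subset_span (Set.mem_insert_of_mem _ rfl)
end

section
/- Let m ≥ 3 and let γ : ℝ → EuclideanSpace ℝ (Fin m) be a smooth unit-speed curve which is three-dimensional with curvature κ(t) = ‖γ''(t)‖ > 0, principal normal P = γ''/κ, torsion τ, and unit field H₁. Then there exists a smooth map N : ℝ → EuclideanSpace ℝ (Fin m) with ‖N(t)‖ = 1 and ⟨N(t), γ'(t)⟩ = 0 for all t, such that N'(t) is a scalar multiple of γ'(t) and N(t) ∈ span{P(t), H₁(t)} for every t. (Any open three-dimensional curve appears as a well-positioned line of curvature of an oriented hypersurface; indeed N(t) = -sin(θ(t)) H₁(t) + cos(θ(t)) P(t) with θ(t) = -∫₀ᵗ τ(s) ds works.) -/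
open scoped RealInnerProductSpace

/-- Any (open) three-dimensional curve appears as a well-positioned line of curvature
of an oriented hypersurface. -/
theorem exists_wellPositioned_line_of_curvature_of_open_curve
    (m : ℕ) (hm : 3 ≤ m)
    (γ : ℝ → EuclideanSpace ℝ (Fin m))
    (hsmooth : ContDiff ℝ (⊤ : ℕ∞) γ)
    (hunit : ∀ t, ‖deriv γ t‖ = 1)
    (hcurv : ∀ t, ‖deriv (deriv γ) t‖ > 0)
    (P : ℝ → EuclideanSpace ℝ (Fin m))
    (hP : ∀ t, P t = ‖deriv (deriv γ) t‖⁻¹ • deriv (deriv γ) t)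
    (τ : ℝ → ℝ) (hτsmooth : ContDiff ℝ (⊤ : ℕ∞) τ)
    (H₁ : ℝ → EuclideanSpace ℝ (Fin m))
    (hH₁smooth : ContDiff ℝ (⊤ : ℕ∞) H₁)
    (hH₁unit : ∀ t, ‖H₁ t‖ = 1)
    (hH₁γ : ∀ t, ⟪H₁ t, deriv γ t⟫ = 0)
    (hH₁P : ∀ t, ⟪H₁ t, P t⟫ = 0)
    (hFrenetP : ∀ t, deriv P t =
      -‖deriv (deriv γ) t‖ • deriv γ t - τ t • H₁ t)
    (hFrenetH₁ : ∀ t, deriv H₁ t = τ t • P t) :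
    ∃ N : ℝ → EuclideanSpace ℝ (Fin m),
      ContDiff ℝ (⊤ : ℕ∞) N ∧
      (∀ t, ‖N t‖ = 1) ∧
      (∀ t, ⟪N t, deriv γ t⟫ = 0) ∧
      (∀ t, ∃ c : ℝ, deriv N t = c • deriv γ t) ∧
      (∀ t, N t ∈ Submodule.span ℝ {P t, H₁ t}) := by
  -- basic smoothness facts
  have hγ' : ContDiff ℝ (⊤ : ℕ∞) (deriv γ) := (contDiff_infty_iff_deriv.mp hsmooth).2
  have hγ'' : ContDiff ℝ (⊤ : ℕ∞) (deriv (deriv γ)) := (contDiff_infty_iff_deriv.mp hγ').2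
  have hκne : ∀ t, deriv (deriv γ) t ≠ 0 := fun t => by
    intro h; have := hcurv t; rw [h] at this; simp at this
  have hκ : ContDiff ℝ (⊤ : ℕ∞) (fun t => ‖deriv (deriv γ) t‖) := hγ''.norm ℝ hκne
  have hPsm : ContDiff ℝ (⊤ : ℕ∞) P := by
    have : P = fun t => ‖deriv (deriv γ) t‖⁻¹ • deriv (deriv γ) t := funext hP
    rw [this]
    exact (hκ.inv (fun t => (hcurv t).ne')).smul hγ''
  have hPunit : ∀ t, ‖P t‖ = 1 := fun t => by
    rw [hP t, norm_smul, norm_inv, norm_norm, inv_mul_cancel₀ (hcurv t).ne']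
  -- ⟪γ'', γ'⟫ = 0
  have hPγ : ∀ t, ⟪P t, deriv γ t⟫ = 0 := by
    intro t
    have hconst : (fun t => ⟪deriv γ t, deriv γ t⟫) = fun _ => (1:ℝ) := by
      funext s
      rw [real_inner_self_eq_norm_sq, hunit s]; norm_num
    have h1 : HasDerivAt (deriv γ) (deriv (deriv γ) t) t :=
      (hγ'.differentiable (by simp) t).hasDerivAt
    have hd := h1.inner ℝ h1
    have hz : ⟪deriv γ t, deriv (deriv γ) t⟫ + ⟪deriv (deriv γ) t, deriv γ t⟫ = 0 := by
      have := hd.deriv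
      rw [hconst] at this
      simpa using this.symm
    have h2 : ⟪deriv (deriv γ) t, deriv γ t⟫ = 0 := by
      have hc := real_inner_comm (deriv γ t) (deriv (deriv γ) t)
      linarith
    rw [hP t, real_inner_smul_left, h2, mul_zero]
  -- the angle function
  set θ : ℝ → ℝ := fun t => -(∫ s in (0:ℝ)..t, τ s) with hθdef
  have hτcont : Continuous τ := hτsmooth.continuous
  have hθd : ∀ t, HasDerivAt θ (-(τ t)) t := by
    intro t
    have h := intervalIntegral.integral_hasDerivAt_right
      (hτcont.intervalIntegrable 0 t)
      (hτcont.stronglyMeasurableAtFilter _ _) hτcont.continuousAt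
    exact h.neg
  have hθsm : ContDiff ℝ (⊤ : ℕ∞) θ := by
    rw [contDiff_infty_iff_deriv]
    refine ⟨fun t => (hθd t).differentiableAt, ?_⟩
    have : deriv θ = fun t => -(τ t) := funext fun t => (hθd t).deriv
    rw [this]; exact hτsmooth.neg
  -- the normal field
  refine ⟨fun t => Real.cos (θ t) • P t - Real.sin (θ t) • H₁ t, ?_, ?_, ?_, ?_, ?_⟩
  · exact ((Real.contDiff_cos.comp hθsm).smul hPsm).sub
      ((Real.contDiff_sin.comp hθsm).smul hH₁smooth)
  · intro t
    have hPH : ⟪P t, H₁ t⟫ = 0 := by rw [real_inner_comm]; exact hH₁P t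
    have h2 : ‖Real.cos (θ t) • P t - Real.sin (θ t) • H₁ t‖ ^ 2 = 1 := by
      rw [← real_inner_self_eq_norm_sq, inner_sub_sub_self]
      simp only [real_inner_smul_left, real_inner_smul_right, hPH, hH₁P, mul_zero, zero_mul]
      rw [real_inner_self_eq_norm_sq, real_inner_self_eq_norm_sq, hPunit, hH₁unit]
      nlinarith [Real.sin_sq_add_cos_sq (θ t)]
    nlinarith [norm_nonneg (Real.cos (θ t) • P t - Real.sin (θ t) • H₁ t)]
  · intro t
    rw [inner_sub_left, real_inner_smul_left, real_inner_smul_left, hPγ t, hH₁γ t]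
    ring
  · intro t
    refine ⟨-(Real.cos (θ t) * ‖deriv (deriv γ) t‖), ?_⟩
    have hPd : HasDerivAt P (deriv P t) t := (hPsm.differentiable (by simp) t).hasDerivAt
    have hHd : HasDerivAt H₁ (deriv H₁ t) t := (hH₁smooth.differentiable (by simp) t).hasDerivAt
    have hcosd : HasDerivAt (fun s => Real.cos (θ s)) (-Real.sin (θ t) * (-(τ t))) t :=
      (Real.hasDerivAt_cos (θ t)).comp t (hθd t)
    have hsind : HasDerivAt (fun s => Real.sin (θ s)) (Real.cos (θ t) * (-(τ t))) t :=
      (Real.hasDerivAt_sin (θ t)).comp t (hθd t)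
    have hNd : HasDerivAt (fun s => Real.cos (θ s) • P s - Real.sin (θ s) • H₁ s)
        (Real.cos (θ t) • deriv P t + (-Real.sin (θ t) * (-(τ t))) • P t -
          (Real.sin (θ t) • deriv H₁ t + (Real.cos (θ t) * (-(τ t))) • H₁ t)) t :=
      (hcosd.smul hPd).sub (hsind.smul hHd)
    rw [hNd.deriv, hFrenetP t, hFrenetH₁ t]
    module
  · intro t
    refine Submodule.mem_span_pair.mpr ⟨Real.cos (θ t), -Real.sin (θ t), ?_⟩
    module
end
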